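/- arXiv:1210.5993 — 5 statements merged into one kernel-verified Lean document; each statement's English description precedes it below -/
import Mathlib

section
/- Let S ⊆ T be a tree extension, M a representation of T over a field K, and B an ordered basis of M that is ordered above S (so in particular, for every arrow α : p → q of T−S, M_α maps B_p bijectively onto B_q). Let β ⊆ B and β_S = β ∩ B_S. Then the Schubert cell C_β^M is empty if and only if C_{β_S}^{M_S} is empty or there exists an arrow α : p → q in T−S with M_α(β_p) ⊄ β_q. -/
open scoped Classical

noncomputable section

namespace QGr

/-- A representation of the quiver with vertex set `V0` and arrow set `A`
(source and target maps are part of the data), given in coordinates with respect to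
an ordered basis `B`: the basis element `b : B` sits at the vertex `vtx b`, the space
at the vertex `p` is `{b : B // vtx b = p} → K`, and `mmap a` is the map attached to
the arrow `a`. -/
structure Rep (K : Type) [Field K] (V0 A B : Type) where
  src : A → V0
  tgt : A → V0
  vtx : B → V0
  mmap : ∀ a : A, ({b : B // vtx b = src a} → K) → ({b : B // vtx b = tgt a} → K)

namespace Rep

variable {K : Type} [Field K] {V0 A B : Type}

/-- A collection of subspaces, one at each vertex. -/
def SubRep (R : Rep K V0 A B) : Type :=
  ∀ p : V0, Submodule K ({b : B // R.vtx b = p} → K)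

/-- The collection `W` is a subrepresentation. -/
def IsSubrep (R : Rep K V0 A B) (W : R.SubRep) : Prop :=
  ∀ a : A, ∀ x ∈ W (R.src a), R.mmap a x ∈ W (R.tgt a)

/-- All structure maps are `K`-linear. -/
def Linear (R : Rep K V0 A B) : Prop := ∀ a : A, IsLinearMap K (R.mmap a)

/-- Membership in the Schubert cell attached to `β ⊆ B`: each `W p` is spanned by vectors
`v b₀ = b₀ + ∑ λ_{b',b₀} b'` (`b₀ ∈ β ∩ B_p`), the sum over `b' < b₀` with `b' ∉ β`. -/
def InCell [LinearOrder B] (R : Rep K V0 A B) (β : Finset B) (W : R.SubRep) : Prop :=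
  ∀ p : V0, ∃ v : {b : B // b ∈ β ∧ R.vtx b = p} → ({b : B // R.vtx b = p} → K),
    (∀ b0, v b0 ⟨b0.val, b0.prop.2⟩ = 1) ∧
    (∀ b0 b1, b1.val ≠ b0.val → ¬(b1.val < b0.val ∧ b1.val ∉ β) → v b0 b1 = 0) ∧
    W p = Submodule.span K (Set.range v)

/-- The Schubert cell `C_β^M`. -/
def Cell [LinearOrder B] (R : Rep K V0 A B) (β : Finset B) : Set R.SubRep :=
  {W | R.IsSubrep W ∧
    (∀ p : V0, Module.finrank K (W p) = (β.filter fun b => R.vtx b = p).card) ∧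
    R.InCell β W}

/-- The quiver Grassmannian `Gr_e(M)`. -/
def Gr (R : Rep K V0 A B) (e : V0 → ℕ) : Set R.SubRep :=
  {W | R.IsSubrep W ∧ ∀ p : V0, Module.finrank K (W p) = e p}

/-- Collections of subspaces indexed by the vertices in `S0`. -/
def SubRepOn (R : Rep K V0 A B) (S0 : Set V0) : Type :=
  ∀ p : {p : V0 // p ∈ S0}, Submodule K ({b : B // R.vtx b = ↑p} → K)

/-- Subrepresentation condition over the subquiver `(S0, S1)`. -/
def IsSubrepOn (R : Rep K V0 A B) (S0 : Set V0) (S1 : Set A) (W : R.SubRepOn S0) : Prop :=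
  ∀ a : A, a ∈ S1 → ∀ (h1 : R.src a ∈ S0) (h2 : R.tgt a ∈ S0),
    ∀ x ∈ W ⟨R.src a, h1⟩, R.mmap a x ∈ W ⟨R.tgt a, h2⟩

/-- Cell membership over the vertices in `S0`. -/
def InCellOn [LinearOrder B] (R : Rep K V0 A B) (S0 : Set V0) (β : Finset B)
    (W : R.SubRepOn S0) : Prop :=
  ∀ p : {p : V0 // p ∈ S0},
    ∃ v : {b : B // b ∈ β ∧ R.vtx b = ↑p} → ({b : B // R.vtx b = ↑p} → K),
      (∀ b0, v b0 ⟨b0.val, b0.prop.2⟩ = 1) ∧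
      (∀ b0 b1, b1.val ≠ b0.val → ¬(b1.val < b0.val ∧ b1.val ∉ β) → v b0 b1 = 0) ∧
      W p = Submodule.span K (Set.range v)

/-- The Schubert cell of the restriction of the representation to the subquiver `(S0, S1)`. -/
def CellOn [LinearOrder B] (R : Rep K V0 A B) (S0 : Set V0) (S1 : Set A) (β : Finset B) :
    Set (R.SubRepOn S0) :=
  {W | R.IsSubrepOn S0 S1 W ∧
    (∀ p : {p : V0 // p ∈ S0},
      Module.finrank K (W p) = (β.filter fun b => R.vtx b = ↑p).card) ∧
    R.InCellOn S0 β W}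

/-- The quiver Grassmannian of the restriction to the subquiver `(S0, S1)`. -/
def GrOn (R : Rep K V0 A B) (S0 : Set V0) (S1 : Set A) (e : V0 → ℕ) :
    Set (R.SubRepOn S0) :=
  {W | R.IsSubrepOn S0 S1 W ∧ ∀ p : {p : V0 // p ∈ S0}, Module.finrank K (W p) = e ↑p}

/-- Restriction of a collection of subspaces to the vertices in `S0`. -/
def resOn (R : Rep K V0 A B) (S0 : Set V0) (W : R.SubRep) : R.SubRepOn S0 :=
  fun p => W ↑p

/-- `p < q` for vertices: every basis element at `p` precedes every basis element at `q`. -/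
def vlt [LT B] (R : Rep K V0 A B) (p q : V0) : Prop :=
  ∀ b b' : B, R.vtx b = p → R.vtx b' = q → b < b'

def vle [LT B] (R : Rep K V0 A B) (p q : V0) : Prop := p = q ∨ R.vlt p q

/-- The matrix of `mmap a` with respect to the ordered bases at source and target is a
(square) identity matrix. -/
def IsIdMat [LinearOrder B] (R : Rep K V0 A B) (a : A) : Prop :=
  ∃ e : {b : B // R.vtx b = R.src a} ≃o {b : B // R.vtx b = R.tgt a},
    ∀ i, R.mmap a (Pi.single i 1) = Pi.single (e i) 1

/-- `mmap a` sends the basis vector `b0` to the basis vector `b1`. -/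
def MapsBasisTo (R : Rep K V0 A B) (a : A) (b0 b1 : B) : Prop :=
  ∃ (h0 : R.vtx b0 = R.src a) (h1 : R.vtx b1 = R.tgt a),
    R.mmap a (Pi.single ⟨b0, h0⟩ 1) = Pi.single ⟨b1, h1⟩ 1

/-- The ordered basis `B` is ordered above the subquiver `(S0, S1)`. -/
def OrderedAbove [LinearOrder B] (R : Rep K V0 A B) (S0 : Set V0) (S1 : Set A) : Prop :=
  (∀ b b' : B, R.vtx b ∈ S0 → R.vtx b' ∉ S0 → b < b') ∧
  (∀ p q : V0, p ≠ q → R.vlt p q ∨ R.vlt q p) ∧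
  (∀ (r : ℕ) (pa : Fin (r+1) → V0), pa 0 ∈ S0 → (∀ i, i ≠ 0 → pa i ∉ S0) →
    Function.Injective pa →
    (∀ i : Fin r, ∃ a : A, (R.src a = pa i.castSucc ∧ R.tgt a = pa i.succ) ∨
      (R.src a = pa i.succ ∧ R.tgt a = pa i.castSucc)) →
    ∀ i : Fin r, R.vlt (pa i.castSucc) (pa i.succ)) ∧
  (∀ a : A, a ∉ S1 → R.IsIdMat a)

end Rep

/-- The relation on the vertices of the subquiver with vertex set `T0` identifying all
vertices of `S0` with each other. -/
def treeRel {V0 : Type} (S0 T0 : Set V0) :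
    {v : V0 // v ∈ T0} → {v : V0 // v ∈ T0} → Prop :=
  fun x y => (↑x ∈ S0 ∧ ↑y ∈ S0)

/-- The subquiver `(T0, T1)` is a tree extension of the subquiver `(S0, S1)`:
the quotient quiver `T/S` (arrows of `T` not in `S`; vertices of `T` with all vertices of `S`
identified) is a tree, i.e. it is connected (as an undirected graph) and the number of its
edges is one less than the number of its vertices. -/
def IsTreeExtensionIn {V0 A : Type} (src tgt : A → V0) (T0 : Set V0) (T1 : Set A)
    (S0 : Set V0) (S1 : Set A) : Prop :=
  (∀ u v : Quot (treeRel S0 T0), Relation.ReflTransGen (fun u v =>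
      ∃ a : A, a ∈ T1 ∧ a ∉ S1 ∧ ∃ (hs : src a ∈ T0) (ht : tgt a ∈ T0),
        (Quot.mk (treeRel S0 T0) ⟨src a, hs⟩ = u ∧ Quot.mk (treeRel S0 T0) ⟨tgt a, ht⟩ = v) ∨
        (Quot.mk (treeRel S0 T0) ⟨src a, hs⟩ = v ∧ Quot.mk (treeRel S0 T0) ⟨tgt a, ht⟩ = u))
      u v) ∧
  Nat.card {a : A // a ∈ T1 ∧ a ∉ S1} + 1 = Nat.card (Quot (treeRel S0 T0))

/-- `T` (the full ambient quiver) is a tree extension of the subquiver `(S0, S1)`. -/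
def IsTreeExtension {V0 A : Type} (src tgt : A → V0) (S0 : Set V0) (S1 : Set A) : Prop :=
  IsTreeExtensionIn src tgt Set.univ Set.univ S0 S1

namespace Rep

variable {K : Type} [Field K] {V0 A B QV QA : Type}

/-- The structure map of the push-forward representation `F_*M` attached to the arrow `aq`
of the target quiver. -/
def pushMap [Fintype A] (R : Rep K V0 A B) (qsrc qtgt : QA → QV) (Fv : V0 → QV)
    (Fa : A → QA) (hFs : ∀ a : A, Fv (R.src a) = qsrc (Fa a)) (aq : QA)
    (x : {b : B // Fv (R.vtx b) = qsrc aq} → K) (c : {b : B // Fv (R.vtx b) = qtgt aq}) : K :=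
  ∑ α : A, if hα : Fa α = aq then
    (if hc : R.vtx c.val = R.tgt α then
      R.mmap α (fun b => x ⟨b.val, by rw [b.prop, hFs α, hα]⟩) ⟨c.val, hc⟩
    else 0) else 0

/-- The push-forward representation `F_*M` along the quiver morphism `F = (Fv, Fa)`. -/
def push [Fintype A] (R : Rep K V0 A B) (qsrc qtgt : QA → QV) (Fv : V0 → QV)
    (Fa : A → QA) (hFs : ∀ a : A, Fv (R.src a) = qsrc (Fa a)) : Rep K QV QA B where
  src := qsrc
  tgt := qtgt
  vtx := fun b => Fv (R.vtx b)
  mmap := R.pushMap qsrc qtgt Fv Fa hFs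

/-- The push-forward `F_*V` of a collection of subspaces: at the vertex `q` of `Q` it consists
of all vectors whose component in each `M_p` with `Fv p = q` lies in `V_p`. -/
def pushSub (R : Rep K V0 A B) (Fv : V0 → QV) (W : R.SubRep) :
    ∀ q : QV, Submodule K ({b : B // Fv (R.vtx b) = q} → K) := fun q =>
  { carrier := {x | ∀ (p : V0) (hq : Fv p = q),
      (fun b : {b : B // R.vtx b = p} =>
        x ⟨b.val, by rw [b.prop]; exact hq⟩) ∈ W p}
    add_mem' := fun hx hy p hq => (W p).add_mem (hx p hq) (hy p hq)
    zero_mem' := fun p hq => (W p).zero_mem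
    smul_mem' := fun c x hx p hq => (W p).smul_mem c (hx p hq) }

/-- `reach n p` : there is an (undirected) walk of length `n` from `p` into `S0`. -/
def reach (R : Rep K V0 A B) (S0 : Set V0) : ℕ → V0 → Prop
  | 0, p => p ∈ S0
  | (n+1), p => ∃ a : A, (R.src a = p ∧ R.reach S0 n (R.tgt a)) ∨
      (R.tgt a = p ∧ R.reach S0 n (R.src a))

/-- The graph distance from `p` to the vertex set `S0`. -/
def distS (R : Rep K V0 A B) (S0 : Set V0) (p : V0) : ℕ :=
  sInf {n : ℕ | R.reach S0 n p}

/-- The fibre length `ε(p,p')` of a pair of vertices. -/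
def eps [LT B] (R : Rep K V0 A B) (Fv : V0 → QV) (p p' : V0) : ℕ :=
  Set.ncard {p'' : V0 | Fv p'' = Fv p ∧ R.vle p p'' ∧ R.vlt p'' p'}

/-- Lexicographic comparison `Ψ(p,p') < Ψ(q,q')`. -/
def psiLt [LT B] (R : Rep K V0 A B) (S0 : Set V0) (Fv : V0 → QV) (p p' q q' : V0) : Prop :=
  R.eps Fv p p' < R.eps Fv q q' ∨ (R.eps Fv p p' = R.eps Fv q q' ∧
    (max (R.distS S0 p) (R.distS S0 p') < max (R.distS S0 q) (R.distS S0 q') ∨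
     (max (R.distS S0 p) (R.distS S0 p') = max (R.distS S0 q) (R.distS S0 q') ∧
       R.vlt p' q')))

def type0 [LT B] (R : Rep K V0 A B) (Fa : A → QA) (aq : QA) (t s : V0) : Prop :=
  ¬ ∃ α : A, Fa α = aq ∧ R.vle (R.src α) s ∧ R.vle t (R.tgt α)

def type1 (R : Rep K V0 A B) (Fa : A → QA) (aq : QA) (t s : V0) : Prop :=
  ∃ α : A, Fa α = aq ∧ R.src α = s ∧ R.tgt α = t

def type2a [LT B] (R : Rep K V0 A B) (S0 : Set V0) (Fv : V0 → QV) (Fa : A → QA)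
    (aq : QA) (t s : V0) : Prop :=
  ∃ α' α'' : A, Fa α' = aq ∧ Fa α'' = aq ∧ R.tgt α' = t ∧ R.vlt (R.src α') s ∧
    R.src α'' = s ∧ R.vlt (R.tgt α'') t ∧ R.psiLt S0 Fv t (R.tgt α'') (R.src α') s

def type2b [LT B] (R : Rep K V0 A B) (S0 : Set V0) (Fv : V0 → QV) (Fa : A → QA)
    (aq : QA) (t s : V0) : Prop :=
  ∃ α' α'' : A, Fa α' = aq ∧ Fa α'' = aq ∧ R.tgt α' = t ∧ R.vlt (R.src α') s ∧
    R.src α'' = s ∧ R.vlt (R.tgt α'') t ∧ R.psiLt S0 Fv (R.src α') s t (R.tgt α'')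

def type3a [LT B] (R : Rep K V0 A B) (S0 : Set V0) (Fv : V0 → QV) (Fa : A → QA)
    (aq : QA) (t s : V0) : Prop :=
  ∃ α'' : A, Fa α'' = aq ∧ R.src α'' = s ∧ R.vlt t (R.tgt α'') ∧
    (¬ ∃ α : A, Fa α = aq ∧ R.tgt α = t) ∧
    ∀ α : A, Fa α = aq → R.vlt t (R.tgt α) → R.vlt (R.tgt α) (R.tgt α'') →
      R.psiLt S0 Fv (R.src α) s t (R.tgt α'')

def type4a [LT B] (R : Rep K V0 A B) (S0 : Set V0) (Fv : V0 → QV) (Fa : A → QA)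
    (aq : QA) (t s : V0) : Prop :=
  ∃ α' : A, Fa α' = aq ∧ R.tgt α' = t ∧ R.vlt (R.src α') s ∧
    (¬ ∃ α : A, Fa α = aq ∧ R.src α = s) ∧
    ∀ α : A, Fa α = aq → R.vlt (R.src α') (R.src α) → R.vlt (R.src α) s →
      R.psiLt S0 Fv t (R.tgt α) (R.src α') s

/-- `F` is strictly ordered with respect to the ordered basis. -/
def StrictlyOrdered [LT B] (R : Rep K V0 A B) (Fa : A → QA) : Prop :=
  ∀ α α' : A, α ≠ α' → Fa α = Fa α' →
    (R.vlt (R.src α) (R.src α') ∧ R.vlt (R.tgt α) (R.tgt α')) ∨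
    (R.vlt (R.src α') (R.src α) ∧ R.vlt (R.tgt α') (R.tgt α))

/-- The pair `(p, p')` is a relevant pair. -/
def relPair [LT B] (R : Rep K V0 A B) (S0 : Set V0) (Fv : V0 → QV) (p p' : V0) : Prop :=
  Fv p = Fv p' ∧ R.vle p p' ∧ p' ∉ S0

/-- Condition of Hypothesis (H) on outgoing arrows at the relevant pair `(p, p')`. -/
def outOK [LT B] (R : Rep K V0 A B) (S0 : Set V0) (Fv : V0 → QV) (Fa : A → QA)
    (qsrc qtgt : QA → QV) (p p' : V0) (aq : QA) : Prop :=
  qsrc aq = Fv p →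
    ((¬ ∃ α : A, Fa α = aq ∧ R.src α = p') →
      ∀ q : V0, Fv q = qtgt aq → R.type0 Fa aq q p') ∧
    ((∃ α : A, Fa α = aq ∧ R.src α = p') →
      ∃ α : A, Fa α = aq ∧ R.src α = p ∧
        (R.type1 Fa aq (R.tgt α) p' ∨ R.type2b S0 Fv Fa aq (R.tgt α) p'))

/-- Condition of Hypothesis (H) on incoming arrows at the relevant pair `(p, p')`. -/
def inOK [LT B] (R : Rep K V0 A B) (S0 : Set V0) (Fv : V0 → QV) (Fa : A → QA)
    (qsrc qtgt : QA → QV) (p p' : V0) (aq : QA) : Prop :=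
  qtgt aq = Fv p →
    ((¬ ∃ α : A, Fa α = aq ∧ R.tgt α = p) →
      ∀ q' : V0, Fv q' = qsrc aq → R.type0 Fa aq p q') ∧
    ((∃ α : A, Fa α = aq ∧ R.tgt α = p) →
      ∃ α : A, Fa α = aq ∧ R.tgt α = p' ∧
        (R.type1 Fa aq p (R.src α) ∨ R.type2a S0 Fv Fa aq p (R.src α)))

/-- Exceptional situation (1) of Hypothesis (H). -/
def exc1 [LinearOrder B] (R : Rep K V0 A B) (S0 : Set V0) (S1 : Set A) (Fv : V0 → QV)
    (Fa : A → QA) (qsrc : QA → QV) (p p' : V0) (aq : QA) : Prop :=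
  qsrc aq = Fv p ∧ ∃ α : A, Fa α = aq ∧ R.src α = p ∧
    (R.type2a S0 Fv Fa aq (R.tgt α) p' ∨ R.type4a S0 Fv Fa aq (R.tgt α) p') ∧
    (α ∈ S1 → R.IsIdMat α)

/-- Exceptional situation (2) of Hypothesis (H). -/
def exc2 [LT B] (R : Rep K V0 A B) (S0 : Set V0) (Fv : V0 → QV) (Fa : A → QA)
    (qtgt : QA → QV) (p p' : V0) (aq : QA) : Prop :=
  qtgt aq = Fv p ∧ ∃ α : A, Fa α = aq ∧ R.tgt α = p' ∧
    (R.type2b S0 Fv Fa aq p (R.src α) ∨ R.type3a S0 Fv Fa aq p (R.src α))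

/-- Hypothesis (H). -/
def HypH [LinearOrder B] (R : Rep K V0 A B) (S0 : Set V0) (S1 : Set A)
    (qsrc qtgt : QA → QV) (Fv : V0 → QV) (Fa : A → QA) : Prop :=
  R.StrictlyOrdered Fa ∧
  ∀ p p' : V0, R.relPair S0 Fv p p' →
    ((∀ aq : QA, R.outOK S0 Fv Fa qsrc qtgt p p' aq ∧ R.inOK S0 Fv Fa qsrc qtgt p p' aq) ∨
     (∃ aq0 : QA,
        (R.exc1 S0 S1 Fv Fa qsrc p p' aq0 ∨ R.exc2 S0 Fv Fa qtgt p p' aq0) ∧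
        ∀ aq : QA, aq ≠ aq0 →
          R.outOK S0 Fv Fa qsrc qtgt p p' aq ∧ R.inOK S0 Fv Fa qsrc qtgt p p' aq))


end Rep

end QGr
namespace QGr
namespace Rep

variable {K V0 A B : Type} [Field K]

theorem single_one_inj {ι : Type*} [DecidableEq ι] {x y : ι}
    (h : (Pi.single x (1:K) : ι → K) = Pi.single y 1) : x = y := by
  by_contra hne
  have hx := congrFun h x
  rw [Pi.single_eq_same, Pi.single_eq_of_ne hne 1] at hx
  exact one_ne_zero hx


theorem pi_single_irrel {ι : Type} (d1 d2 : DecidableEq ι) (x : ι) (v : K) :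
    @Pi.single ι (fun _ => K) (fun _ => inferInstance) d1 x v =
    @Pi.single ι (fun _ => K) (fun _ => inferInstance) d2 x v := by
  have h : d1 = d2 := by
    funext a b
    exact Subsingleton.elim _ _
  rw [h]

theorem single_one_inj2 {ι : Type} (d1 d2 : DecidableEq ι) {x y : ι}
    (h : @Pi.single ι (fun _ => K) (fun _ => inferInstance) d1 x 1 =
      @Pi.single ι (fun _ => K) (fun _ => inferInstance) d2 y 1) : x = y := by
  have h2 := (pi_single_irrel d2 d1 x (1:K)).trans h
  by_contra hne
  have hx := congrFun h2 x
  have e1 : @Pi.single ι (fun _ => K) (fun _ => inferInstance) d2 x 1 x = 1 :=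
    @Pi.single_eq_same ι (fun _ => K) (fun _ => inferInstance) d2 x 1
  have e2 : @Pi.single ι (fun _ => K) (fun _ => inferInstance) d2 y 1 x = 0 :=
    @Pi.single_eq_of_ne ι (fun _ => K) (fun _ => inferInstance) d2 y x hne 1
  exact one_ne_zero (e1.symm.trans (hx.trans e2))

variable [Fintype B] [LinearOrder B]

theorem cell_linearIndependent (R : Rep K V0 A B) (β : Finset B) (p : V0)
    (v : {b : B // b ∈ β ∧ R.vtx b = p} → {b : B // R.vtx b = p} → K)
    (h1 : ∀ b0, v b0 ⟨b0.val, b0.prop.2⟩ = 1)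
    (h2 : ∀ b0 b1, b1.val ≠ b0.val → ¬(b1.val < b0.val ∧ b1.val ∉ β) → v b0 b1 = 0) :
    LinearIndependent K v := by
  rw [Fintype.linearIndependent_iff]
  intro g hg j
  have hj := congrFun hg ⟨j.val, j.prop.2⟩
  rw [Finset.sum_apply] at hj
  rw [Finset.sum_eq_single j] at hj
  · simpa [h1 j] using hj
  · intro i _ hij
    have hne : (⟨j.val, j.prop.2⟩ : {b : B // R.vtx b = p}).val ≠ i.val := by
      intro hv; exact hij (Subtype.ext hv.symm)
    have := h2 i ⟨j.val, j.prop.2⟩ hne (by simp [j.prop.1])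
    simp [this]
  · intro h; exact absurd (Finset.mem_univ j) h

theorem cell_finrank (R : Rep K V0 A B) (β : Finset B) (p : V0)
    (v : {b : B // b ∈ β ∧ R.vtx b = p} → {b : B // R.vtx b = p} → K)
    (h1 : ∀ b0, v b0 ⟨b0.val, b0.prop.2⟩ = 1)
    (h2 : ∀ b0 b1, b1.val ≠ b0.val → ¬(b1.val < b0.val ∧ b1.val ∉ β) → v b0 b1 = 0) :
    Module.finrank K (Submodule.span K (Set.range v)) = (β.filter fun b => R.vtx b = p).card := by
  rw [finrank_span_eq_card (cell_linearIndependent R β p v h1 h2)]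
  rw [Fintype.card_subtype]
  congr 1
  ext b
  simp [Finset.mem_filter]

theorem cell_coords (R : Rep K V0 A B) (β : Finset B) (p : V0)
    (v : {b : B // b ∈ β ∧ R.vtx b = p} → {b : B // R.vtx b = p} → K)
    (h1 : ∀ b0, v b0 ⟨b0.val, b0.prop.2⟩ = 1)
    (h2 : ∀ b0 b1, b1.val ≠ b0.val → ¬(b1.val < b0.val ∧ b1.val ∉ β) → v b0 b1 = 0)
    (x : {b : B // R.vtx b = p} → K) (hx : x ∈ Submodule.span K (Set.range v)) :
    ∀ c, x c = ∑ i, x ⟨i.val, i.prop.2⟩ * v i c := by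
  obtain ⟨μ, hμ⟩ := (Submodule.mem_span_range_iff_exists_fun K).mp hx
  have hcoef : ∀ j, μ j = x ⟨j.val, j.prop.2⟩ := by
    intro j
    have hj := congrFun hμ ⟨j.val, j.prop.2⟩
    rw [Finset.sum_apply] at hj
    rw [Finset.sum_eq_single j] at hj
    · simpa [h1 j] using hj
    · intro i _ hij
      have hne : (⟨j.val, j.prop.2⟩ : {b : B // R.vtx b = p}).val ≠ i.val := by
        intro hv; exact hij (Subtype.ext hv.symm)
      have := h2 i ⟨j.val, j.prop.2⟩ hne (by simp [j.prop.1])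
      simp [this]
    · intro h; exact absurd (Finset.mem_univ j) h
  intro c
  conv_lhs => rw [← hμ]
  rw [Finset.sum_apply]
  refine Finset.sum_congr rfl fun i _ => ?_
  rw [hcoef i, Pi.smul_apply, smul_eq_mul]

theorem mmap_relabel (R : Rep K V0 A B) (hlin : R.Linear) (a : A)
    (e : {b : B // R.vtx b = R.src a} ≃o {b : B // R.vtx b = R.tgt a})
    (he : ∀ i, R.mmap a (Pi.single i 1) = Pi.single (e i) 1)
    (x : {b : B // R.vtx b = R.src a} → K) :
    R.mmap a x = fun c => x (e.symm c) := by
  let φ : ({b : B // R.vtx b = R.src a} → K) →ₗ[K] ({b : B // R.vtx b = R.tgt a} → K) :=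
    IsLinearMap.mk' _ (hlin a)
  let ψ : ({b : B // R.vtx b = R.src a} → K) →ₗ[K] ({b : B // R.vtx b = R.tgt a} → K) :=
    { toFun := fun x c => x (e.symm c)
      map_add' := fun _ _ => rfl
      map_smul' := fun _ _ => rfl }
  have hφψ : φ = ψ := by
    apply (Pi.basisFun K _).ext
    intro i
    rw [Pi.basisFun_apply]
    show R.mmap a (Pi.single i 1) = _
    rw [he]
    funext c
    simp only [ψ, LinearMap.coe_mk, AddHom.coe_mk]
    rcases eq_or_ne c (e i) with h | h
    · subst h; rw [Pi.single_eq_same, e.symm_apply_apply, Pi.single_eq_same]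
    · have h2 : e.symm c ≠ i := fun hh => h (by rw [← hh, e.apply_symm_apply])
      rw [Pi.single_eq_of_ne h, Pi.single_eq_of_ne h2]
  show φ x = _
  rw [hφψ]
  rfl


end Rep
end QGr


namespace QGr

theorem eqvGen_treeRel {V0 : Type} {S0 : Set V0} {x y : {v : V0 // v ∈ (Set.univ : Set V0)}}
    (h : Relation.EqvGen (treeRel S0 Set.univ) x y) :
    x.val = y.val ∨ (x.val ∈ S0 ∧ y.val ∈ S0) := by
  induction h with
  | rel _ _ h => exact Or.inr h
  | refl => exact Or.inl rfl
  | symm _ _ _ ih =>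
      rcases ih with h | h
      exacts [Or.inl h.symm, Or.inr ⟨h.2, h.1⟩]
  | trans _ _ _ _ _ ih1 ih2 =>
      rcases ih1 with h | h <;> rcases ih2 with h' | h'
      · exact Or.inl (h.trans h')
      · exact Or.inr ⟨h ▸ h'.1, h'.2⟩
      · exact Or.inr ⟨h.1, h' ▸ h.2⟩
      · exact Or.inr ⟨h.1, h'.2⟩

theorem mk_treeRel_eq {V0 : Type} {S0 : Set V0} {q p : V0}
    (h : Quot.mk (treeRel S0 Set.univ) ⟨q, trivial⟩ = Quot.mk (treeRel S0 Set.univ) ⟨p, trivial⟩) :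
    q = p ∨ (q ∈ S0 ∧ p ∈ S0) :=
  eqvGen_treeRel (Quot.eq.mp h)

/-- Unfolding map for the quotient of the tree relation. -/
def qmap {V0 : Type} (S0 : Set V0) (s0 : V0) : ({p : V0 // p ∉ S0} ⊕ Unit) →
    Quot (treeRel S0 (Set.univ : Set V0))
  | Sum.inl p => Quot.mk _ ⟨p.val, trivial⟩
  | Sum.inr _ => Quot.mk _ ⟨s0, trivial⟩

def qinv {V0 : Type} (S0 : Set V0) : Quot (treeRel S0 (Set.univ : Set V0)) →
    ({p : V0 // p ∉ S0} ⊕ Unit) :=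
  Quot.lift (fun x => if h : x.val ∈ S0 then Sum.inr Unit.unit else Sum.inl ⟨x.val, h⟩)
    (by intro x y hxy; simp [hxy.1, hxy.2])

/-- The quotient of the tree relation is the non-`S0` vertices plus one point. -/
def quotTreeEquiv {V0 : Type} (S0 : Set V0) (s0 : V0) (hs0 : s0 ∈ S0) :
    Quot (treeRel S0 (Set.univ : Set V0)) ≃ ({p : V0 // p ∉ S0} ⊕ Unit) where
  toFun := qinv S0
  invFun := qmap S0 s0
  left_inv := by
    apply Quot.ind
    intro x
    by_cases h : x.val ∈ S0
    · have h1 : qinv S0 (Quot.mk _ x) = Sum.inr Unit.unit := dif_pos h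
      rw [h1]
      exact Quot.sound ⟨hs0, h⟩
    · have h1 : qinv S0 (Quot.mk _ x) = Sum.inl ⟨x.val, h⟩ := dif_neg h
      rw [h1]
      rfl
  right_inv := by
    rintro (p | ⟨⟩)
    · exact dif_neg p.prop
    · exact dif_pos hs0

namespace Rep

variable {K V0 A B : Type} [Field K]

theorem reach_exists (R : Rep K V0 A B) (S0 : Set V0) (S1 : Set A)
    (htree : IsTreeExtension R.src R.tgt S0 S1) {s0 : V0} (hs0 : s0 ∈ S0) (p : V0) :
    ∃ n, R.reach S0 n p := by
  have key : ∀ v, Relation.ReflTransGen (fun u v => ∃ a : A, a ∈ (Set.univ : Set A) ∧ a ∉ S1 ∧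
      ∃ (hs : R.src a ∈ (Set.univ : Set V0)) (ht : R.tgt a ∈ (Set.univ : Set V0)),
        (Quot.mk (treeRel S0 Set.univ) ⟨R.src a, hs⟩ = u ∧
          Quot.mk (treeRel S0 Set.univ) ⟨R.tgt a, ht⟩ = v) ∨
        (Quot.mk (treeRel S0 Set.univ) ⟨R.src a, hs⟩ = v ∧
          Quot.mk (treeRel S0 Set.univ) ⟨R.tgt a, ht⟩ = u))
      (Quot.mk (treeRel S0 Set.univ) ⟨s0, trivial⟩) v →
      ∀ q : V0, Quot.mk (treeRel S0 Set.univ) ⟨q, trivial⟩ = v → ∃ n, R.reach S0 n q := by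
    intro v hv
    induction hv with
    | refl =>
        intro q hq
        rcases mk_treeRel_eq hq with h | h
        · exact ⟨0, show q ∈ S0 from h ▸ hs0⟩
        · exact ⟨0, h.1⟩
    | tail _ hrel ih =>
        intro q hq
        obtain ⟨a, -, -, hs, ht, hor⟩ := hrel
        rcases hor with ⟨hsu, htv⟩ | ⟨hsv, htu⟩
        · rcases mk_treeRel_eq (hq.trans htv.symm) with h | h
          · obtain ⟨n, hn⟩ := ih (R.src a) hsu
            exact ⟨n + 1, ⟨a, Or.inr ⟨h.symm, hn⟩⟩⟩
          · exact ⟨0, h.1⟩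
        · rcases mk_treeRel_eq (hq.trans hsv.symm) with h | h
          · obtain ⟨n, hn⟩ := ih (R.tgt a) htu
            exact ⟨n + 1, ⟨a, Or.inl ⟨h.symm, hn⟩⟩⟩
          · exact ⟨0, h.1⟩
  exact key _ (htree.1 _ _) p rfl

theorem parent_exists (R : Rep K V0 A B) (S0 : Set V0) (S1 : Set A)
    (hsub : ∀ a ∈ S1, R.src a ∈ S0 ∧ R.tgt a ∈ S0)
    (htree : IsTreeExtension R.src R.tgt S0 S1) (hne : S0.Nonempty) (p : V0) (hp : p ∉ S0) :
    ∃ a, a ∉ S1 ∧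
      ((R.src a = p ∧ R.distS S0 (R.tgt a) < R.distS S0 p) ∨
       (R.tgt a = p ∧ R.distS S0 (R.src a) < R.distS S0 p)) := by
  obtain ⟨s0, hs0⟩ := hne
  have hne' : {n | R.reach S0 n p}.Nonempty := reach_exists R S0 S1 htree hs0 p
  have hmem : R.reach S0 (R.distS S0 p) p := Nat.sInf_mem hne'
  have h0 : R.distS S0 p ≠ 0 := by
    intro h
    rw [h] at hmem
    exact hp hmem
  obtain ⟨m, hm⟩ := Nat.exists_eq_succ_of_ne_zero h0
  rw [hm] at hmem
  obtain ⟨a, hor⟩ := hmem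
  refine ⟨a, fun haS1 => ?_, ?_⟩
  · rcases hor with ⟨h1, _⟩ | ⟨h1, _⟩
    · exact hp (h1 ▸ (hsub a haS1).1)
    · exact hp (h1 ▸ (hsub a haS1).2)
  · rcases hor with ⟨h1, h2⟩ | ⟨h1, h2⟩
    · exact Or.inl ⟨h1, lt_of_le_of_lt (Nat.sInf_le h2) (by rw [hm]; exact Nat.lt_succ_self m)⟩
    · exact Or.inr ⟨h1, lt_of_le_of_lt (Nat.sInf_le h2) (by rw [hm]; exact Nat.lt_succ_self m)⟩

end Rep
end QGr


namespace QGr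
namespace Rep

variable {K V0 A B : Type} [Field K] [LinearOrder B]

/-- Recursive construction of cell families, transported from `S0` along the tree. -/
noncomputable def vfam (R : Rep K V0 A B) (S0 : Set V0) (S1 : Set A) (β : Finset B)
    (par : V0 → A)
    (iso : ∀ a, a ∉ S1 → ({b : B // R.vtx b = R.src a} ≃o {b : B // R.vtx b = R.tgt a}))
    (hpar : ∀ p, p ∉ S0 → (par p ∉ S1) ∧
      ((R.src (par p) = p ∧ R.distS S0 (R.tgt (par p)) < R.distS S0 p) ∨
       (R.tgt (par p) = p ∧ R.distS S0 (R.src (par p)) < R.distS S0 p)))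
    (hcl : ∀ a, (ha : a ∉ S1) → ∀ b : {b : B // R.vtx b = R.src a}, b.1 ∈ β →
      (iso a ha b).1 ∈ β)
    (v0 : ∀ p : V0, {b : B // b ∈ β ∧ R.vtx b = p} → {b : B // R.vtx b = p} → K)
    (p : V0) : {b : B // b ∈ β ∧ R.vtx b = p} → {b : B // R.vtx b = p} → K :=
  if hp : p ∈ S0 then v0 p
  else
    if hsrc : R.src (par p) = p then
      fun b0 b1 =>
        vfam R S0 S1 β par iso hpar hcl v0 (R.tgt (par p))
          ⟨(iso (par p) (hpar p hp).1 ⟨b0.1, b0.2.2.trans hsrc.symm⟩).1,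
            hcl _ (hpar p hp).1 _ b0.2.1,
            (iso (par p) (hpar p hp).1 ⟨b0.1, b0.2.2.trans hsrc.symm⟩).2⟩
          ⟨(iso (par p) (hpar p hp).1 ⟨b1.1, b1.2.trans hsrc.symm⟩).1,
            (iso (par p) (hpar p hp).1 ⟨b1.1, b1.2.trans hsrc.symm⟩).2⟩
    else
      fun b0 b1 =>
        if hb : ((iso (par p) (hpar p hp).1).symm
            ⟨b0.1, b0.2.2.trans ((hpar p hp).2.resolve_left (fun h => hsrc h.1)).1.symm⟩).1 ∈ β then
          if b1.1 ∈ β ∧ b1.1 ≠ b0.1 then 0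
          else vfam R S0 S1 β par iso hpar hcl v0 (R.src (par p))
            ⟨((iso (par p) (hpar p hp).1).symm
                ⟨b0.1, b0.2.2.trans ((hpar p hp).2.resolve_left (fun h => hsrc h.1)).1.symm⟩).1,
              hb,
              ((iso (par p) (hpar p hp).1).symm
                ⟨b0.1, b0.2.2.trans ((hpar p hp).2.resolve_left (fun h => hsrc h.1)).1.symm⟩).2⟩
            ⟨((iso (par p) (hpar p hp).1).symm
                ⟨b1.1, b1.2.trans ((hpar p hp).2.resolve_left (fun h => hsrc h.1)).1.symm⟩).1,
              ((iso (par p) (hpar p hp).1).symm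
                ⟨b1.1, b1.2.trans ((hpar p hp).2.resolve_left (fun h => hsrc h.1)).1.symm⟩).2⟩
        else Pi.single (M := fun _ : {b : B // R.vtx b = p} => K) ⟨b0.1, b0.2.2⟩ 1 b1
  termination_by R.distS S0 p
  decreasing_by
  · rcases (hpar p hp).2 with ⟨_, h⟩ | ⟨h1, h2⟩
    · exact h
    · rw [hsrc] at h2
      exact absurd h2 (lt_irrefl _)
  · exact ((hpar p hp).2.resolve_left (fun h => hsrc h.1)).2

end Rep
end QGr


namespace QGr
namespace Rep

variable {K V0 A B : Type} [Field K] [LinearOrder B]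

theorem vfam_cell (R : Rep K V0 A B) (S0 : Set V0) (S1 : Set A) (β : Finset B)
    (par : V0 → A)
    (iso : ∀ a, a ∉ S1 → ({b : B // R.vtx b = R.src a} ≃o {b : B // R.vtx b = R.tgt a}))
    (hpar : ∀ p, p ∉ S0 → (par p ∉ S1) ∧
      ((R.src (par p) = p ∧ R.distS S0 (R.tgt (par p)) < R.distS S0 p) ∨
       (R.tgt (par p) = p ∧ R.distS S0 (R.src (par p)) < R.distS S0 p)))
    (hcl : ∀ a, (ha : a ∉ S1) → ∀ b : {b : B // R.vtx b = R.src a}, b.1 ∈ β →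
      (iso a ha b).1 ∈ β)
    (v0 : ∀ p : V0, {b : B // b ∈ β ∧ R.vtx b = p} → {b : B // R.vtx b = p} → K)
    (hv0 : ∀ p, p ∈ S0 → (∀ b0, v0 p b0 ⟨b0.val, b0.prop.2⟩ = 1) ∧
      (∀ b0 b1, b1.val ≠ b0.val → ¬(b1.val < b0.val ∧ b1.val ∉ β) → v0 p b0 b1 = 0)) :
    ∀ p, (∀ b0, vfam R S0 S1 β par iso hpar hcl v0 p b0 ⟨b0.val, b0.prop.2⟩ = 1) ∧
      (∀ b0 b1, b1.val ≠ b0.val → ¬(b1.val < b0.val ∧ b1.val ∉ β) →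
        vfam R S0 S1 β par iso hpar hcl v0 p b0 b1 = 0) := by
  have main : ∀ n p, R.distS S0 p = n →
      (∀ b0, vfam R S0 S1 β par iso hpar hcl v0 p b0 ⟨b0.val, b0.prop.2⟩ = 1) ∧
      (∀ b0 b1, b1.val ≠ b0.val → ¬(b1.val < b0.val ∧ b1.val ∉ β) →
        vfam R S0 S1 β par iso hpar hcl v0 p b0 b1 = 0) := by
    intro n
    induction n using Nat.strong_induction_on with
    | _ n ih =>
      intro p hn
      by_cases hp : p ∈ S0
      · constructor
        · intro b0
          rw [vfam, dif_pos hp]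
          exact (hv0 p hp).1 b0
        · intro b0 b1 h1 h2
          rw [vfam, dif_pos hp]
          exact (hv0 p hp).2 b0 b1 h1 h2
      · have hS1 : par p ∉ S1 := (hpar p hp).1
        by_cases hsrc : R.src (par p) = p
        · -- pull case
          have hlt : R.distS S0 (R.tgt (par p)) < R.distS S0 p := by
            rcases (hpar p hp).2 with ⟨_, h⟩ | ⟨h1, h2⟩
            · exact h
            · rw [hsrc] at h2
              exact absurd h2 (lt_irrefl _)
          have IH := ih _ (hn ▸ hlt) (R.tgt (par p)) rfl
          constructor
          · intro b0
            rw [vfam, dif_neg hp, dif_pos hsrc]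
            exact IH.1 _
          · intro b0 b1 hne h2
            rw [vfam, dif_neg hp, dif_pos hsrc]
            refine IH.2 _ _ ?_ ?_
            · intro hv
              exact hne (congrArg Subtype.val
                ((iso (par p) hS1).injective (Subtype.ext hv)))
            · rintro ⟨hlt', hnin⟩
              refine h2 ⟨?_, fun hmem => hnin (hcl _ hS1 _ hmem)⟩
              have h3 : (iso (par p) hS1 ⟨b1.1, b1.2.trans hsrc.symm⟩) <
                  (iso (par p) hS1 ⟨b0.1, b0.2.2.trans hsrc.symm⟩) :=
                Subtype.coe_lt_coe.mp hlt'
              exact Subtype.coe_lt_coe.mpr ((iso (par p) hS1).lt_iff_lt.mp h3)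
        · -- push case
          have htgt : R.tgt (par p) = p := ((hpar p hp).2.resolve_left (fun h => hsrc h.1)).1
          have hlt : R.distS S0 (R.src (par p)) < R.distS S0 p :=
            ((hpar p hp).2.resolve_left (fun h => hsrc h.1)).2
          have IH := ih _ (hn ▸ hlt) (R.src (par p)) rfl
          constructor
          · intro b0
            rw [vfam, dif_neg hp, dif_neg hsrc]
            by_cases hb : ((iso (par p) hS1).symm ⟨b0.1, b0.2.2.trans htgt.symm⟩).1 ∈ β
            · rw [dif_pos hb, if_neg (by simp)]
              exact IH.1 _
            · rw [dif_neg hb]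
              exact Pi.single_eq_same (M := fun _ : {b : B // R.vtx b = p} => K) _ _
          · intro b0 b1 hne h2
            rw [vfam, dif_neg hp, dif_neg hsrc]
            by_cases hb : ((iso (par p) hS1).symm ⟨b0.1, b0.2.2.trans htgt.symm⟩).1 ∈ β
            · rw [dif_pos hb]
              by_cases hcond : b1.1 ∈ β ∧ b1.1 ≠ b0.1
              · rw [if_pos hcond]
              · rw [if_neg hcond]
                have hb1 : b1.1 ∉ β := fun hmem => hcond ⟨hmem, hne⟩
                refine IH.2 _ _ ?_ ?_
                · intro hv
                  exact hne (congrArg Subtype.val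
                    ((iso (par p) hS1).symm.injective (Subtype.ext hv)))
                · rintro ⟨hlt', -⟩
                  refine h2 ⟨?_, hb1⟩
                  have h3 : ((iso (par p) hS1).symm ⟨b1.1, b1.2.trans htgt.symm⟩) <
                      ((iso (par p) hS1).symm ⟨b0.1, b0.2.2.trans htgt.symm⟩) :=
                    Subtype.coe_lt_coe.mp hlt'
                  exact Subtype.coe_lt_coe.mpr ((iso (par p) hS1).symm.lt_iff_lt.mp h3)
            · rw [dif_neg hb]
              exact Pi.single_eq_of_ne (M := fun _ : {b : B // R.vtx b = p} => K) (fun h => hne (congrArg Subtype.val h)) _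
  exact fun p => main _ p rfl

end Rep
end QGr


namespace QGr
namespace Rep

variable {K V0 A B : Type} [Field K] [Fintype B] [LinearOrder B]

theorem vfam_cast (R : Rep K V0 A B) (S0 : Set V0) (S1 : Set A) (β : Finset B)
    (par : V0 → A)
    (iso : ∀ a, a ∉ S1 → ({b : B // R.vtx b = R.src a} ≃o {b : B // R.vtx b = R.tgt a}))
    (hpar : ∀ p, p ∉ S0 → (par p ∉ S1) ∧
      ((R.src (par p) = p ∧ R.distS S0 (R.tgt (par p)) < R.distS S0 p) ∨
       (R.tgt (par p) = p ∧ R.distS S0 (R.src (par p)) < R.distS S0 p)))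
    (hcl : ∀ a, (ha : a ∉ S1) → ∀ b : {b : B // R.vtx b = R.src a}, b.1 ∈ β →
      (iso a ha b).1 ∈ β)
    (v0 : ∀ p : V0, {b : B // b ∈ β ∧ R.vtx b = p} → {b : B // R.vtx b = p} → K)
    (q p : V0) (h : q = p) (b0 : {b : B // b ∈ β ∧ R.vtx b = q})
    (b1 : {b : B // R.vtx b = q}) :
    vfam R S0 S1 β par iso hpar hcl v0 q b0 b1 =
      vfam R S0 S1 β par iso hpar hcl v0 p ⟨b0.1, b0.2.1, b0.2.2.trans h⟩ ⟨b1.1, b1.2.trans h⟩ := by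
  subst h
  rfl

theorem vfam_map (R : Rep K V0 A B) (hlin : R.Linear) (S0 : Set V0) (S1 : Set A) (β : Finset B)
    (par : V0 → A)
    (iso : ∀ a, a ∉ S1 → ({b : B // R.vtx b = R.src a} ≃o {b : B // R.vtx b = R.tgt a}))
    (hpar : ∀ p, p ∉ S0 → (par p ∉ S1) ∧
      ((R.src (par p) = p ∧ R.distS S0 (R.tgt (par p)) < R.distS S0 p) ∨
       (R.tgt (par p) = p ∧ R.distS S0 (R.src (par p)) < R.distS S0 p)))
    (hcl : ∀ a, (ha : a ∉ S1) → ∀ b : {b : B // R.vtx b = R.src a}, b.1 ∈ β →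
      (iso a ha b).1 ∈ β)
    (v0 : ∀ p : V0, {b : B // b ∈ β ∧ R.vtx b = p} → {b : B // R.vtx b = p} → K)
    (hiso : ∀ a, (ha : a ∉ S1) → ∀ i, R.mmap a (Pi.single i 1) = Pi.single (iso a ha i) 1)
    (hv0 : ∀ p, p ∈ S0 → (∀ b0, v0 p b0 ⟨b0.val, b0.prop.2⟩ = 1) ∧
      (∀ b0 b1, b1.val ≠ b0.val → ¬(b1.val < b0.val ∧ b1.val ∉ β) → v0 p b0 b1 = 0))
    (p : V0) (hp : p ∉ S0) :
    ∀ x ∈ Submodule.span K (Set.range (vfam R S0 S1 β par iso hpar hcl v0 (R.src (par p)))),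
      R.mmap (par p) x ∈
        Submodule.span K (Set.range (vfam R S0 S1 β par iso hpar hcl v0 (R.tgt (par p)))) := by
  intro x hx
  have hS1 : par p ∉ S1 := (hpar p hp).1
  have hrel : ∀ y, R.mmap (par p) y = fun c => y ((iso (par p) hS1).symm c) :=
    mmap_relabel R hlin (par p) (iso (par p) hS1) (hiso _ hS1)
  have hgen : ∀ b0, R.mmap (par p) (vfam R S0 S1 β par iso hpar hcl v0 (R.src (par p)) b0) ∈
      Submodule.span K (Set.range (vfam R S0 S1 β par iso hpar hcl v0 (R.tgt (par p)))) := by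
    intro b0
    by_cases hsrc : R.src (par p) = p
    · -- pull case: the arrow points out of `p`
      have key : R.mmap (par p) (vfam R S0 S1 β par iso hpar hcl v0 (R.src (par p)) b0) = vfam R S0 S1 β par iso hpar hcl v0 (R.tgt (par p))
          ⟨((iso (par p) hS1) ⟨b0.1, b0.2.2⟩).1, hcl _ hS1 _ b0.2.1, ((iso (par p) hS1) ⟨b0.1, b0.2.2⟩).2⟩ := by
        rw [hrel]
        funext c
        rw [vfam_cast R S0 S1 β par iso hpar hcl v0 (R.src (par p)) p hsrc]
        rw [vfam, dif_neg hp, dif_pos hsrc]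
        exact congrArg (vfam R S0 S1 β par iso hpar hcl v0 (R.tgt (par p))
          ⟨((iso (par p) hS1) ⟨b0.1, b0.2.2⟩).1, hcl _ hS1 _ b0.2.1, ((iso (par p) hS1) ⟨b0.1, b0.2.2⟩).2⟩)
          (Subtype.ext (congrArg Subtype.val ((iso (par p) hS1).apply_symm_apply c)))
      rw [key]
      exact Submodule.subset_span (Set.mem_range_self _)
    · -- push case: the arrow points into `p`
      have htgt : R.tgt (par p) = p := ((hpar p hp).2.resolve_left (fun h => hsrc h.1)).1
      have hcell := vfam_cell R S0 S1 β par iso hpar hcl v0 hv0 (R.src (par p))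
      have hvalA : ∀ (c : {b : B // b ∈ β ∧ R.vtx b = R.tgt (par p)})
          (c1 : {b : B // R.vtx b = R.tgt (par p)}),
          ((iso (par p) hS1).symm ⟨c.1, c.2.2⟩).1 ∈ β → c1.1 ∈ β → c1.1 ≠ c.1 →
          vfam R S0 S1 β par iso hpar hcl v0 (R.tgt (par p)) c c1 = 0 := by
        intro c c1 hb h1 h2
        rw [vfam_cast R S0 S1 β par iso hpar hcl v0 (R.tgt (par p)) p htgt]
        rw [vfam, dif_neg hp, dif_neg hsrc, dif_pos hb, if_pos ⟨h1, h2⟩]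
      have hvalB : ∀ (c : {b : B // b ∈ β ∧ R.vtx b = R.tgt (par p)})
          (c1 : {b : B // R.vtx b = R.tgt (par p)})
          (hb : ((iso (par p) hS1).symm ⟨c.1, c.2.2⟩).1 ∈ β),
          ¬(c1.1 ∈ β ∧ c1.1 ≠ c.1) →
          vfam R S0 S1 β par iso hpar hcl v0 (R.tgt (par p)) c c1 = vfam R S0 S1 β par iso hpar hcl v0 (R.src (par p))
            ⟨((iso (par p) hS1).symm ⟨c.1, c.2.2⟩).1, hb, ((iso (par p) hS1).symm ⟨c.1, c.2.2⟩).2⟩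
            ((iso (par p) hS1).symm c1) := by
        intro c c1 hb hcond
        rw [vfam_cast R S0 S1 β par iso hpar hcl v0 (R.tgt (par p)) p htgt]
        rw [vfam, dif_neg hp, dif_neg hsrc, dif_pos hb, if_neg hcond]
      have hvalC : ∀ (c : {b : B // b ∈ β ∧ R.vtx b = R.tgt (par p)})
          (c1 : {b : B // R.vtx b = R.tgt (par p)}),
          ((iso (par p) hS1).symm ⟨c.1, c.2.2⟩).1 ∉ β → c1.1 = c.1 →
          vfam R S0 S1 β par iso hpar hcl v0 (R.tgt (par p)) c c1 = 1 := by
        intro c c1 hb hcc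
        rw [vfam_cast R S0 S1 β par iso hpar hcl v0 (R.tgt (par p)) p htgt]
        rw [vfam, dif_neg hp, dif_neg hsrc, dif_neg hb]
        rw [show (⟨c1.1, c1.2.trans htgt⟩ : {b : B // R.vtx b = p}) =
          ⟨c.1, c.2.2.trans htgt⟩ from Subtype.ext hcc]
        exact Pi.single_eq_same (M := fun _ : {b : B // R.vtx b = p} => K) _ _
      have hvalD : ∀ (c : {b : B // b ∈ β ∧ R.vtx b = R.tgt (par p)})
          (c1 : {b : B // R.vtx b = R.tgt (par p)}),
          ((iso (par p) hS1).symm ⟨c.1, c.2.2⟩).1 ∉ β → c1.1 ≠ c.1 →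
          vfam R S0 S1 β par iso hpar hcl v0 (R.tgt (par p)) c c1 = 0 := by
        intro c c1 hb hcc
        rw [vfam_cast R S0 S1 β par iso hpar hcl v0 (R.tgt (par p)) p htgt]
        rw [vfam, dif_neg hp, dif_neg hsrc, dif_neg hb]
        exact Pi.single_eq_of_ne (M := fun _ : {b : B // R.vtx b = p} => K)
          (fun h => hcc (congrArg Subtype.val h)) 1
      have key : R.mmap (par p) (vfam R S0 S1 β par iso hpar hcl v0 (R.src (par p)) b0) =
          ∑ c : {b : B // b ∈ β ∧ R.vtx b = R.tgt (par p)},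
            (R.mmap (par p) (vfam R S0 S1 β par iso hpar hcl v0 (R.src (par p)) b0) ⟨c.1, c.2.2⟩) • vfam R S0 S1 β par iso hpar hcl v0 (R.tgt (par p)) c := by
        funext c1
        rw [Finset.sum_apply]
        rw [hrel]
        have hterm : ∀ c : {b : B // b ∈ β ∧ R.vtx b = R.tgt (par p)},
            ((fun c' => vfam R S0 S1 β par iso hpar hcl v0 (R.src (par p)) b0 ((iso (par p) hS1).symm c')) (⟨c.1, c.2.2⟩ :
              {b : B // R.vtx b = R.tgt (par p)}) • vfam R S0 S1 β par iso hpar hcl v0 (R.tgt (par p)) c) c1 =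
            vfam R S0 S1 β par iso hpar hcl v0 (R.src (par p)) b0 ((iso (par p) hS1).symm ⟨c.1, c.2.2⟩) *
              vfam R S0 S1 β par iso hpar hcl v0 (R.tgt (par p)) c c1 := fun c => rfl
        by_cases hc1 : c1.1 ∈ β
        · refine (((Finset.sum_eq_single (⟨c1.1, hc1, c1.2⟩ :
            {b : B // b ∈ β ∧ R.vtx b = R.tgt (par p)}) ?_ ?_)).trans ?_).symm
          · intro c _ hcne
            rw [hterm c]
            have hne : c1.1 ≠ c.1 := fun hv' => hcne (Subtype.ext hv'.symm)
            by_cases hb : ((iso (par p) hS1).symm ⟨c.1, c.2.2⟩).1 ∈ β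
            · rw [hvalA c c1 hb hc1 hne, mul_zero]
            · rw [hvalD c c1 hb hne, mul_zero]
          · intro habs
            exact absurd (Finset.mem_univ _) habs
          · rw [hterm _]
            by_cases hb : ((iso (par p) hS1).symm
                (⟨c1.1, c1.2⟩ : {b : B // R.vtx b = R.tgt (par p)})).1 ∈ β
            · rw [hvalB _ c1 hb (fun hcond => hcond.2 rfl)]
              rw [hcell.1 ⟨((iso (par p) hS1).symm ⟨c1.1, c1.2⟩).1, hb,
                ((iso (par p) hS1).symm ⟨c1.1, c1.2⟩).2⟩, mul_one]
            · rw [hvalC _ c1 hb rfl, mul_one]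
        · -- c1 outside β : only the transported pivot of b0 contributes
          have hmem : ((iso (par p) hS1) ⟨b0.1, b0.2.2⟩).1 ∈ β := hcl _ hS1 _ b0.2.1
          refine (((Finset.sum_eq_single
            (⟨((iso (par p) hS1) ⟨b0.1, b0.2.2⟩).1, hmem, ((iso (par p) hS1) ⟨b0.1, b0.2.2⟩).2⟩ :
            {b : B // b ∈ β ∧ R.vtx b = R.tgt (par p)}) ?_ ?_)).trans ?_).symm
          · intro c _ hcne
            rw [hterm c]
            by_cases hb : ((iso (par p) hS1).symm ⟨c.1, c.2.2⟩).1 ∈ β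
            · have hcoef : vfam R S0 S1 β par iso hpar hcl v0 (R.src (par p)) b0 ((iso (par p) hS1).symm ⟨c.1, c.2.2⟩) = 0 := by
                refine hcell.2 b0 _ ?_ ?_
                · intro hv'
                  apply hcne
                  have h1 : (iso (par p) hS1).symm ⟨c.1, c.2.2⟩ = ⟨b0.1, b0.2.2⟩ :=
                    Subtype.ext hv'
                  have h2 : (⟨c.1, c.2.2⟩ : {b : B // R.vtx b = R.tgt (par p)}) =
                      (iso (par p) hS1) ⟨b0.1, b0.2.2⟩ := by
                    rw [← h1, (iso (par p) hS1).apply_symm_apply]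
                  exact Subtype.ext (show c.1 = ((iso (par p) hS1) ⟨b0.1, b0.2.2⟩).1
                    from congrArg Subtype.val h2)
                · rintro ⟨-, hnin⟩
                  exact hnin hb
              rw [hcoef, zero_mul]
            · have hne : c1.1 ≠ c.1 := fun hv' => hc1 (hv' ▸ c.2.1)
              rw [hvalD c c1 hb hne, mul_zero]
          · intro habs
            exact absurd (Finset.mem_univ _) habs
          · rw [hterm _]
            have hsymm : (iso (par p) hS1).symm
                (⟨((iso (par p) hS1) ⟨b0.1, b0.2.2⟩).1, ((iso (par p) hS1) ⟨b0.1, b0.2.2⟩).2⟩ :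
                  {b : B // R.vtx b = R.tgt (par p)}) = ⟨b0.1, b0.2.2⟩ :=
              (iso (par p) hS1).symm_apply_apply _
            rw [hsymm]
            have hne : c1.1 ≠ ((iso (par p) hS1) ⟨b0.1, b0.2.2⟩).1 := fun hv' => hc1 (hv' ▸ hmem)
            rw [hvalB _ c1 (by rw [hsymm]; exact b0.2.1) (fun hcond => hc1 hcond.1)]
            have hpiv : vfam R S0 S1 β par iso hpar hcl v0 (R.src (par p)) b0 ⟨b0.1, b0.2.2⟩ = 1 := hcell.1 b0
            rw [show vfam R S0 S1 β par iso hpar hcl v0 (R.src (par p))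
                ⟨((iso (par p) hS1).symm ⟨((iso (par p) hS1) ⟨b0.1, b0.2.2⟩).1,
                    ((iso (par p) hS1) ⟨b0.1, b0.2.2⟩).2⟩).1, by rw [hsymm]; exact b0.2.1,
                  ((iso (par p) hS1).symm ⟨((iso (par p) hS1) ⟨b0.1, b0.2.2⟩).1,
                    ((iso (par p) hS1) ⟨b0.1, b0.2.2⟩).2⟩).2⟩
                ((iso (par p) hS1).symm c1) = vfam R S0 S1 β par iso hpar hcl v0 (R.src (par p)) b0 ((iso (par p) hS1).symm c1)
              from ?hx1]
            case hx1 =>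
              congr 1
              have hv5 : ((iso (par p) hS1).symm ⟨((iso (par p) hS1) ⟨b0.1, b0.2.2⟩).1,
                  ((iso (par p) hS1) ⟨b0.1, b0.2.2⟩).2⟩).val =
                  (⟨b0.1, b0.2.2⟩ : {b : B // R.vtx b = R.src (par p)}).val :=
                congrArg Subtype.val hsymm
              exact Subtype.ext hv5
            rw [hpiv, one_mul]
      rw [key]
      refine Submodule.sum_mem _ ?_
      intro c _
      exact Submodule.smul_mem _ _ (Submodule.subset_span (Set.mem_range_self _))
  have hmap : Submodule.map (IsLinearMap.mk' _ (hlin (par p)))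
      (Submodule.span K (Set.range (vfam R S0 S1 β par iso hpar hcl v0 (R.src (par p))))) ≤
      Submodule.span K (Set.range (vfam R S0 S1 β par iso hpar hcl v0 (R.tgt (par p)))) := by
    rw [Submodule.map_span, Submodule.span_le]
    rintro _ ⟨_, ⟨b0, rfl⟩, rfl⟩
    exact hgen b0
  exact hmap ⟨x, hx, rfl⟩

end Rep
end QGr


namespace QGr
namespace Rep

variable {K V0 A B : Type} [Field K] [Fintype B] [LinearOrder B]

/-- If a subrepresentation lies in the cell of `β` and the arrow `a` has an identity matrix,
then the basis elements of `β` at the source of `a` are mapped into `β`. -/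
theorem cell_closed (R : Rep K V0 A B) (hlin : R.Linear) (β : Finset B) (W : R.SubRep)
    (hW : W ∈ R.Cell β) (a : A)
    (e : {b : B // R.vtx b = R.src a} ≃o {b : B // R.vtx b = R.tgt a})
    (he : ∀ i, R.mmap a (Pi.single i 1) = Pi.single (e i) 1)
    (b0 : {b : B // R.vtx b = R.src a}) (hb0 : b0.1 ∈ β) : (e b0).1 ∈ β := by
  by_contra hc
  obtain ⟨v, hv1, hv2, hvW⟩ := hW.2.2 (R.src a)
  obtain ⟨w, hw1, hw2, hwW⟩ := hW.2.2 (R.tgt a)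
  set x := R.mmap a (v ⟨b0.1, hb0, b0.2⟩) with hxdef
  have hvmem : v ⟨b0.1, hb0, b0.2⟩ ∈ W (R.src a) := by
    rw [hvW]
    exact Submodule.subset_span (Set.mem_range_self _)
  have hxW : x ∈ W (R.tgt a) := hW.1 a _ hvmem
  have hrel : x = fun c => v ⟨b0.1, hb0, b0.2⟩ (e.symm c) := by
    rw [hxdef]
    exact mmap_relabel R hlin a e he _
  have hx1 : x (e b0) = 1 := by
    rw [hrel]
    show v ⟨b0.1, hb0, b0.2⟩ (e.symm (e b0)) = 1
    rw [e.symm_apply_apply]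
    exact hv1 ⟨b0.1, hb0, b0.2⟩
  have hx0 : x (e b0) = 0 := by
    have hco := cell_coords R β (R.tgt a) w hw1 hw2 x (by rw [hwW] at hxW; exact hxW) (e b0)
    rw [hco]
    apply Finset.sum_eq_zero
    intro i _
    by_cases hwi : w i (e b0) = 0
    · rw [hwi, mul_zero]
    · -- then (e b0) < pivot i, so the coefficient vanishes
      have hlt1 : (e b0).1 < i.1 := by
        by_contra hnlt
        apply hwi
        refine hw2 i (e b0) ?_ ?_
        · intro hv'
          exact hc (hv' ▸ i.2.1)
        · rintro ⟨hl, -⟩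
          exact hnlt hl
      have hcoef : x ⟨i.1, i.2.2⟩ = 0 := by
        rw [hrel]
        show v ⟨b0.1, hb0, b0.2⟩ (e.symm ⟨i.1, i.2.2⟩) = 0
        refine hv2 _ _ ?_ ?_
        · intro hv'
          have h1 : e.symm ⟨i.1, i.2.2⟩ = ⟨b0.1, b0.2⟩ := Subtype.ext hv'
          have h2 : (⟨i.1, i.2.2⟩ : {b : B // R.vtx b = R.tgt a}) = e ⟨b0.1, b0.2⟩ := by
            rw [← h1, e.apply_symm_apply]
          have h3 : i.1 = (e b0).1 := congrArg Subtype.val h2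
          rw [h3] at hlt1
          exact lt_irrefl _ hlt1
        · rintro ⟨hl, -⟩
          have h4 : e.symm ⟨i.1, i.2.2⟩ < e.symm (⟨(e b0).1, (e b0).2⟩ :
              {b : B // R.vtx b = R.tgt a}) := by
            have h5 : e.symm (⟨(e b0).1, (e b0).2⟩ : {b : B // R.vtx b = R.tgt a}) = b0 :=
              e.symm_apply_apply b0
            rw [h5]
            exact Subtype.coe_lt_coe.mp hl
          have h6 : i.1 < (e b0).1 := Subtype.coe_lt_coe.mpr (e.symm.lt_iff_lt.mp h4)
          exact absurd (h6.trans hlt1) (lt_irrefl _)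
      rw [hcoef, zero_mul]
  rw [hx1] at hx0
  exact one_ne_zero hx0

end Rep
end QGr


namespace QGr
namespace Rep

variable {K V0 A B : Type} [Field K] [Fintype B] [LinearOrder B]

theorem exists_v0 (R : Rep K V0 A B) (S0 : Set V0) (β : Finset B)
    (vS : ∀ p : {p : V0 // p ∈ S0},
      {b : B // b ∈ β.filter (fun b => R.vtx b ∈ S0) ∧ R.vtx b = ↑p} →
        {b : B // R.vtx b = ↑p} → K)
    (hvS1 : ∀ p b0, vS p b0 ⟨b0.1, b0.2.2⟩ = 1)
    (hvS2 : ∀ p b0 b1, b1.1 ≠ b0.1 →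
      ¬(b1.1 < b0.1 ∧ b1.1 ∉ β.filter (fun b => R.vtx b ∈ S0)) → vS p b0 b1 = 0) :
    ∃ v0 : ∀ p : V0, {b : B // b ∈ β ∧ R.vtx b = p} → {b : B // R.vtx b = p} → K,
      (∀ p, (∀ b0, v0 p b0 ⟨b0.1, b0.2.2⟩ = 1) ∧
        (∀ b0 b1, b1.1 ≠ b0.1 → ¬(b1.1 < b0.1 ∧ b1.1 ∉ β) → v0 p b0 b1 = 0)) ∧
      (∀ p (hp : p ∈ S0), Set.range (v0 p) = Set.range (vS ⟨p, hp⟩)) ∧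
      (∀ p, p ∉ S0 → ∀ b0, v0 p b0 =
        Pi.single (M := fun _ : {b : B // R.vtx b = p} => K) ⟨b0.1, b0.2.2⟩ 1) := by
  refine ⟨fun p => if hp : p ∈ S0 then
      (fun b0 b1 => vS ⟨p, hp⟩ ⟨b0.1, Finset.mem_filter.mpr ⟨b0.2.1,
        (show R.vtx b0.1 ∈ S0 by rw [b0.2.2]; exact hp)⟩, b0.2.2⟩ b1)
    else fun b0 => Pi.single (M := fun _ : {b : B // R.vtx b = p} => K) ⟨b0.1, b0.2.2⟩ 1,
    ?_, ?_, ?_⟩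
  · intro p
    by_cases hp : p ∈ S0
    · constructor
      · intro b0
        simp only [dif_pos hp]
        exact hvS1 ⟨p, hp⟩ _
      · intro b0 b1 hne hcond
        simp only [dif_pos hp]
        refine hvS2 ⟨p, hp⟩ _ b1 hne ?_
        rintro ⟨hlt, hnin⟩
        exact hcond ⟨hlt, fun hmem => hnin (Finset.mem_filter.mpr ⟨hmem,
          (show R.vtx b1.1 ∈ S0 by rw [b1.2]; exact hp)⟩)⟩
    · constructor
      · intro b0
        simp only [dif_neg hp]
        exact Pi.single_eq_same (M := fun _ : {b : B // R.vtx b = p} => K) _ _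
      · intro b0 b1 hne _
        simp only [dif_neg hp]
        exact Pi.single_eq_of_ne (M := fun _ : {b : B // R.vtx b = p} => K) (fun h => hne (congrArg Subtype.val h)) 1
  · intro p hp
    ext x
    simp only [Set.mem_range, dif_pos hp]
    constructor
    · rintro ⟨b0, rfl⟩
      exact ⟨⟨b0.1, Finset.mem_filter.mpr ⟨b0.2.1,
        (show R.vtx b0.1 ∈ S0 by rw [b0.2.2]; exact hp)⟩, b0.2.2⟩, rfl⟩
    · rintro ⟨c, rfl⟩
      exact ⟨⟨c.1, (Finset.mem_filter.mp c.2.1).1, c.2.2⟩, rfl⟩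
  · intro p hp b0
    simp only [dif_neg hp]

theorem cell_of_singles (R : Rep K V0 A B) (hlin : R.Linear) (S0 : Set V0) (S1 : Set A)
    (β : Finset B)
    (iso : ∀ a, a ∉ S1 → ({b : B // R.vtx b = R.src a} ≃o {b : B // R.vtx b = R.tgt a}))
    (hiso : ∀ a, (ha : a ∉ S1) → ∀ i, R.mmap a (Pi.single i 1) = Pi.single (iso a ha i) 1)
    (hcl : ∀ a, (ha : a ∉ S1) → ∀ b : {b : B // R.vtx b = R.src a}, b.1 ∈ β →
      (iso a ha b).1 ∈ β)
    (v0 : ∀ p : V0, {b : B // b ∈ β ∧ R.vtx b = p} → {b : B // R.vtx b = p} → K)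
    (hv0all : ∀ p, (∀ b0, v0 p b0 ⟨b0.1, b0.2.2⟩ = 1) ∧
      (∀ b0 b1, b1.1 ≠ b0.1 → ¬(b1.1 < b0.1 ∧ b1.1 ∉ β) → v0 p b0 b1 = 0))
    (hsingle : ∀ p, p ∉ S0 → ∀ b0, v0 p b0 =
      Pi.single (M := fun _ : {b : B // R.vtx b = p} => K) ⟨b0.1, b0.2.2⟩ 1)
    (hA : ∀ a : A, a ∉ S1 ∧ R.src a ∉ S0 ∧ R.tgt a ∉ S0) :
    (fun p => Submodule.span K (Set.range (v0 p))) ∈ R.Cell β := by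
  refine ⟨?_, ?_, ?_⟩
  · intro a x hx
    obtain ⟨ha, hsa, hta⟩ := hA a
    have hgen : ∀ b0, R.mmap a (v0 (R.src a) b0) ∈
        Submodule.span K (Set.range (v0 (R.tgt a))) := by
      intro b0
      rw [hsingle (R.src a) hsa b0]
      rw [hiso a ha ⟨b0.1, b0.2.2⟩]
      have hkey : (Pi.single (iso a ha ⟨b0.1, b0.2.2⟩) (1:K) :
          {b : B // R.vtx b = R.tgt a} → K) = v0 (R.tgt a)
            ⟨(iso a ha ⟨b0.1, b0.2.2⟩).1, hcl a ha _ b0.2.1, (iso a ha ⟨b0.1, b0.2.2⟩).2⟩ := by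
        rw [hsingle (R.tgt a) hta]
      rw [hkey]
      exact Submodule.subset_span (Set.mem_range_self _)
    have hmap : Submodule.map (IsLinearMap.mk' _ (hlin a))
        (Submodule.span K (Set.range (v0 (R.src a)))) ≤
        Submodule.span K (Set.range (v0 (R.tgt a))) := by
      rw [Submodule.map_span, Submodule.span_le]
      rintro _ ⟨_, ⟨b0, rfl⟩, rfl⟩
      exact hgen b0
    exact hmap ⟨x, hx, rfl⟩
  · intro p
    exact cell_finrank R β p (v0 p) (hv0all p).1 (hv0all p).2
  · intro p
    exact ⟨v0 p, (hv0all p).1, (hv0all p).2, rfl⟩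

end Rep
end QGr


open QGr in
/-- Let `T` be a tree extension of the subquiver `S = (S0, S1)`, `M` a
representation of `T` with ordered basis `B` ordered above `S`, and `β ⊆ B` with
`β_S = β ∩ B_S`.  Then `C_β^M` is empty if and only if `C_{β_S}^{M_S}` is empty or there is
an arrow `α : p → q` of `T − S` such that `M_α(β_p) ⊄ β_q`. -/
theorem schubert_cell_empty_iff_tree_extension
    {K V0 A B : Type} [Field K] [Fintype V0] [Fintype A] [Fintype B] [LinearOrder B]
    (R : Rep K V0 A B) (hlin : R.Linear)
    (S0 : Set V0) (S1 : Set A)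
    (hsub : ∀ a ∈ S1, R.src a ∈ S0 ∧ R.tgt a ∈ S0)
    (htree : IsTreeExtension R.src R.tgt S0 S1)
    (hord : R.OrderedAbove S0 S1)
    (β : Finset B) :
    R.Cell β = ∅ ↔
      (R.CellOn S0 S1 (β.filter fun b => R.vtx b ∈ S0) = ∅ ∨
        ∃ a : A, a ∉ S1 ∧ ∃ b0 ∈ β, R.vtx b0 = R.src a ∧
          ¬ ∃ b1 ∈ β, R.MapsBasisTo a b0 b1) := by
  classical
  choose iso hiso using hord.2.2.2
  constructor
  · -- if the cell is empty, the RHS holds (by contradiction)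
    intro hCell
    by_contra hRHS
    push_neg at hRHS
    obtain ⟨hC, hclosed⟩ := hRHS
    obtain ⟨V, hV⟩ := hC
    obtain ⟨hVsub, hVrank, hVcell⟩ := hV
    -- closure of β under the arrows not in S1, in terms of the order isomorphisms
    have hcl : ∀ a, (ha : a ∉ S1) → ∀ b : {b : B // R.vtx b = R.src a}, b.1 ∈ β →
        (iso a ha b).1 ∈ β := by
      intro a ha b hbβ
      obtain ⟨b1, hb1β, h0, h1, heq⟩ := hclosed a ha b.1 hbβ b.2
      have h2 := hiso a ha ⟨b.1, h0⟩
      have h3 := h2.symm.trans ((congrArg (R.mmap a)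
        (Rep.pi_single_irrel _ _ _ _)).trans heq)
      have h5 : (iso a ha b).1 = b1 :=
        congrArg Subtype.val (Rep.single_one_inj2 _ _ h3)
      rw [h5]
      exact hb1β
    choose vS hvS1 hvS2 hvS3 using hVcell
    obtain ⟨v0, hv0all, hv0range, hv0single⟩ := Rep.exists_v0 R S0 β vS hvS1 hvS2
    have hv0 : ∀ p, p ∈ S0 → (∀ b0, v0 p b0 ⟨b0.val, b0.prop.2⟩ = 1) ∧
        (∀ b0 b1, b1.val ≠ b0.val → ¬(b1.val < b0.val ∧ b1.val ∉ β) → v0 p b0 b1 = 0) :=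
      fun p _ => hv0all p
    have hspan : ∀ p (hp : p ∈ S0),
        Submodule.span K (Set.range (v0 p)) = V ⟨p, hp⟩ := by
      intro p hp
      rw [hv0range p hp]
      exact (hvS3 ⟨p, hp⟩).symm
    by_cases hS0 : S0.Nonempty
    · by_cases hA : Nonempty A
      · -- main case: transport along the tree
        obtain ⟨par, hpar⟩ : ∃ par : V0 → A, ∀ p, p ∉ S0 → (par p ∉ S1) ∧
            ((R.src (par p) = p ∧ R.distS S0 (R.tgt (par p)) < R.distS S0 p) ∨
             (R.tgt (par p) = p ∧ R.distS S0 (R.src (par p)) < R.distS S0 p)) := by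
          choose f hf using (fun p : {p : V0 // p ∉ S0} =>
            Rep.parent_exists R S0 S1 hsub htree hS0 p.1 p.2)
          exact ⟨fun p => if h : p ∉ S0 then f ⟨p, h⟩ else Classical.choice hA,
            fun p h => by simp only [dif_pos h]; exact hf ⟨p, h⟩⟩
        obtain ⟨s0, hs0⟩ := hS0
        have hcard : Nat.card {a : A // a ∉ S1} = Nat.card {p : V0 // p ∉ S0} := by
          have h1 := htree.2
          have h2 : Nat.card {a : A // a ∈ (Set.univ : Set A) ∧ a ∉ S1} =
              Nat.card {a : A // a ∉ S1} :=
            Nat.card_congr (Equiv.subtypeEquivRight (fun a => by simp))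
          have h3 : Nat.card (Quot (treeRel S0 (Set.univ : Set V0))) =
              Nat.card {p : V0 // p ∉ S0} + 1 := by
            rw [Nat.card_congr (quotTreeEquiv S0 s0 hs0), Nat.card_sum]
            simp
          rw [h2, h3] at h1
          omega
        have hinj : Function.Injective (fun p : {p : V0 // p ∉ S0} =>
            (⟨par p.1, (hpar p.1 p.2).1⟩ : {a : A // a ∉ S1})) := by
          intro p q hpq
          have hpq' : par p.1 = par q.1 := congrArg Subtype.val hpq
          rcases (hpar p.1 p.2).2 with ⟨h1, h2⟩ | ⟨h1, h2⟩ <;>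
            rcases (hpar q.1 q.2).2 with ⟨h3, h4⟩ | ⟨h3, h4⟩
          · exact Subtype.ext (h1.symm.trans (by rw [hpq', h3]))
          · exfalso
            rw [hpq'] at h1 h2
            rw [h1] at h4
            rw [h3] at h2
            exact absurd (h2.trans h4) (lt_irrefl _)
          · exfalso
            rw [hpq'] at h1 h2
            rw [h1] at h4
            rw [h3] at h2
            exact absurd (h2.trans h4) (lt_irrefl _)
          · exact Subtype.ext (h1.symm.trans (by rw [hpq', h3]))
        have hbij : Function.Bijective (fun p : {p : V0 // p ∉ S0} =>
            (⟨par p.1, (hpar p.1 p.2).1⟩ : {a : A // a ∉ S1})) := by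
          rw [Fintype.bijective_iff_injective_and_card]
          refine ⟨hinj, ?_⟩
          rw [← Nat.card_eq_fintype_card, ← Nat.card_eq_fintype_card]
          exact hcard.symm
        have hsurj : ∀ a : A, a ∉ S1 → ∃ p, p ∉ S0 ∧ par p = a := by
          intro a ha
          obtain ⟨p, hp⟩ := hbij.2 ⟨a, ha⟩
          exact ⟨p.1, p.2, congrArg Subtype.val hp⟩
        have hcellW := Rep.vfam_cell R S0 S1 β par iso hpar hcl v0 hv0
        have hmemW : (fun p => Submodule.span K
            (Set.range (R.vfam S0 S1 β par iso hpar hcl v0 p)) : R.SubRep) ∈ R.Cell β := by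
          refine ⟨?_, ?_, ?_⟩
          · intro a x hx
            by_cases haS1 : a ∈ S1
            · have hs := (hsub a haS1).1
              have ht := (hsub a haS1).2
              have h1 : R.vfam S0 S1 β par iso hpar hcl v0 (R.src a) = v0 (R.src a) := by
                rw [Rep.vfam, dif_pos hs]
              have h2 : R.vfam S0 S1 β par iso hpar hcl v0 (R.tgt a) = v0 (R.tgt a) := by
                rw [Rep.vfam, dif_pos ht]
              have hx' : x ∈ V ⟨R.src a, hs⟩ := by
                rw [← hspan _ hs, ← h1]
                exact hx
              show R.mmap a x ∈ Submodule.span K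
                (Set.range (R.vfam S0 S1 β par iso hpar hcl v0 (R.tgt a)))
              rw [h2, hspan _ ht]
              exact hVsub a haS1 hs ht x hx'
            · obtain ⟨p, hpns, hpeq⟩ := hsurj a haS1
              subst hpeq
              exact Rep.vfam_map R hlin S0 S1 β par iso hpar hcl v0 hiso hv0 p hpns x hx
          · intro p
            exact Rep.cell_finrank R β p _ (hcellW p).1 (hcellW p).2
          · intro p
            exact ⟨R.vfam S0 S1 β par iso hpar hcl v0 p, (hcellW p).1, (hcellW p).2, rfl⟩
        exact Set.notMem_empty _ (hCell ▸ hmemW)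
      · -- no arrows at all
        have hmemW := Rep.cell_of_singles R hlin S0 S1 β iso hiso hcl v0 hv0all hv0single
          (fun a => absurd ⟨a⟩ hA)
        exact Set.notMem_empty _ (hCell ▸ hmemW)
    · -- S0 is empty
      rw [Set.not_nonempty_iff_eq_empty] at hS0
      have hmemW := Rep.cell_of_singles R hlin S0 S1 β iso hiso hcl v0 hv0all hv0single
        (fun a => by
          subst hS0
          refine ⟨fun haS1 => ?_, fun h => h, fun h => h⟩
          exact absurd (hsub a haS1).1 (Set.notMem_empty _))
      exact Set.notMem_empty _ (hCell ▸ hmemW)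
  · -- conversely, the RHS forces the cell to be empty
    intro hRHS
    rw [Set.eq_empty_iff_forall_notMem]
    intro W hW
    rcases hRHS with hC | ⟨a, haS1, b0, hb0β, hb0v, hnex⟩
    · -- the restriction of W lies in the cell over S
      have hmem : R.resOn S0 W ∈ R.CellOn S0 S1 (β.filter fun b => R.vtx b ∈ S0) := by
        refine ⟨?_, ?_, ?_⟩
        · intro a haS1 h1 h2 x hx
          exact hW.1 a x hx
        · rintro ⟨p, hp⟩
          have hfil : (β.filter fun b => R.vtx b ∈ S0).filter (fun b => R.vtx b = p) =
              β.filter (fun b => R.vtx b = p) := by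
            ext b
            simp only [Finset.mem_filter]
            constructor
            · rintro ⟨⟨hb1, _⟩, hb3⟩
              exact ⟨hb1, hb3⟩
            · rintro ⟨hb1, hb3⟩
              exact ⟨⟨hb1, by rw [hb3]; exact hp⟩, hb3⟩
          rw [hfil]
          exact hW.2.1 p
        · rintro ⟨p, hp⟩
          obtain ⟨v, h1, h2, hsp⟩ := hW.2.2 p
          refine ⟨fun b0 => v ⟨b0.1, (Finset.mem_filter.mp b0.2.1).1, b0.2.2⟩, ?_, ?_, ?_⟩
          · intro b0
            exact h1 _
          · intro b0 b1 hne hcond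
            refine h2 _ b1 hne ?_
            rintro ⟨hlt, hnin⟩
            exact hcond ⟨hlt, fun hmem' => hnin (Finset.mem_filter.mp hmem').1⟩
          · have hres : R.resOn S0 W ⟨p, hp⟩ = W p := rfl
            rw [hres, hsp]
            congr 1
            ext x
            simp only [Set.mem_range]
            constructor
            · rintro ⟨c, rfl⟩
              exact ⟨⟨c.1, Finset.mem_filter.mpr ⟨c.2.1,
                (show R.vtx c.1 ∈ S0 by rw [c.2.2]; exact hp)⟩, c.2.2⟩, rfl⟩
            · rintro ⟨c, rfl⟩
              exact ⟨⟨c.1, (Finset.mem_filter.mp c.2.1).1, c.2.2⟩, rfl⟩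
      rw [hC] at hmem
      exact Set.notMem_empty _ hmem
    · -- a bad arrow contradicts closedness of the cell
      apply hnex
      refine ⟨(iso a haS1 ⟨b0, hb0v⟩).1, ?_, hb0v, (iso a haS1 ⟨b0, hb0v⟩).2, ?_⟩
      · exact Rep.cell_closed R hlin β W hW a (iso a haS1) (hiso a haS1) ⟨b0, hb0v⟩ hb0β
      · exact (congrArg (R.mmap a) (Rep.pi_single_irrel _ _ _ _)).trans
          ((hiso a haS1 ⟨b0, hb0v⟩).trans (Rep.pi_single_irrel _ _ _ _))
end
end

section
/- Let F : T → Q be a morphism of quivers and M a representation of T over a field K with ordered basis B. Then: (a) for every subrepresentation V of M, the family F_*V with (F_*V)_q = ⊕_{p ∈ F⁻¹(q)} V_p is a subrepresentation of F_*M; (b) for every dimension vector e of T, the map ι : Gr_e(M) → Gr_{F(e)}(F_*M), V ↦ F_*V, is injective, where F(e)_q = Σ_{p∈F⁻¹(q)} e_p; (c) for every subset β ⊆ B of type e, ι maps the Schubert cell C_β^M into the Schubert cell C_β^{F_*M}. -/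
open scoped Classical

noncomputable section

namespace QGr.Rep

variable {K : Type} [Field K] {V0 A B QV QA : Type}

theorem mem_pushSub {R : Rep K V0 A B} {Fv : V0 → QV} {W : R.SubRep} {q : QV}
    {x : {b : B // Fv (R.vtx b) = q} → K} :
    x ∈ R.pushSub Fv W q ↔ ∀ (p : V0) (hq : Fv p = q),
      (fun b : {b : B // R.vtx b = p} =>
        x ⟨b.val, by rw [b.prop]; exact hq⟩) ∈ W p :=
  Iff.rfl

/-- The pushforward subspace at `q` is the product of the subspaces in the fibre. -/
def pushEquiv (R : Rep K V0 A B) (Fv : V0 → QV) (W : R.SubRep) (q : QV) :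
    (R.pushSub Fv W q) ≃ₗ[K] ∀ p : {p : V0 // Fv p = q}, (W ↑p) where
  toFun x := fun p => ⟨fun b => x.val ⟨b.val, by rw [b.prop]; exact p.prop⟩,
    x.prop ↑p p.prop⟩
  map_add' x y := rfl
  map_smul' c x := rfl
  invFun y := ⟨fun b => (y ⟨R.vtx b.val, b.prop⟩).val ⟨b.val, rfl⟩, by
    intro p hq
    have h := (y ⟨p, hq⟩).prop
    convert h using 1
    funext c
    obtain ⟨b, hb⟩ := c
    subst hb
    rfl⟩
  left_inv x := rfl
  right_inv y := by
    have key : ∀ (p₁ p₂ : {p : V0 // Fv p = q}) (_ : p₁ = p₂)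
        (c₁ : {b : B // R.vtx b = ↑p₁}) (c₂ : {b : B // R.vtx b = ↑p₂}),
        c₁.val = c₂.val → (y p₁).val c₁ = (y p₂).val c₂ := by
      rintro p₁ p₂ rfl c₁ c₂ h
      rw [Subtype.ext h]
    funext p
    apply Subtype.ext
    funext c
    exact key _ p (Subtype.ext c.prop) _ c rfl

theorem finrank_pushSub [Fintype V0] [Fintype B] (R : Rep K V0 A B) (Fv : V0 → QV)
    (W : R.SubRep) (q : QV) :
    Module.finrank K (R.pushSub Fv W q) =
      ∑ p ∈ Finset.univ.filter (fun p : V0 => Fv p = q), Module.finrank K (W p) := by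
  rw [(R.pushEquiv Fv W q).finrank_eq, Module.finrank_pi_fintype]
  exact (Finset.sum_subtype _ (fun p => by simp) fun p => Module.finrank K (W p)).symm

/-- Extension by zero from the space at `p` to the pushforward space at `q = Fv p`. -/
def ext0 (R : Rep K V0 A B) (Fv : V0 → QV) {p : V0} {q : QV} (hq : Fv p = q) :
    ({b : B // R.vtx b = p} → K) →ₗ[K] ({b : B // Fv (R.vtx b) = q} → K) where
  toFun x := fun b => if h : R.vtx b.val = p then x ⟨b.val, h⟩ else 0
  map_add' x y := by
    funext b
    by_cases h : R.vtx b.val = p <;> simp [h]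
  map_smul' c x := by
    funext b
    by_cases h : R.vtx b.val = p <;> simp [h]

theorem ext0_restrict_self (R : Rep K V0 A B) (Fv : V0 → QV) {p : V0} {q : QV}
    (hq : Fv p = q) (x : {b : B // R.vtx b = p} → K) :
    (fun c : {b : B // R.vtx b = p} =>
      R.ext0 Fv hq x ⟨c.val, by rw [c.prop]; exact hq⟩) = x := by
  funext c
  show (if h : R.vtx c.val = p then x ⟨c.val, h⟩ else 0) = x c
  rw [dif_pos c.prop]

theorem ext0_restrict_ne (R : Rep K V0 A B) (Fv : V0 → QV) {p : V0} {q : QV}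
    (hq : Fv p = q) (x : {b : B // R.vtx b = p} → K) {p' : V0} (hp' : Fv p' = q)
    (hne : p' ≠ p) :
    (fun c : {b : B // R.vtx b = p'} =>
      R.ext0 Fv hq x ⟨c.val, by rw [c.prop]; exact hp'⟩) = 0 := by
  funext c
  show (if h : R.vtx c.val = p then x ⟨c.val, h⟩ else 0) = 0
  rw [dif_neg (by rw [c.prop]; exact hne)]

theorem pushSub_isSubrep [Fintype A] (R : Rep K V0 A B)
    (qsrc qtgt : QA → QV) (Fv : V0 → QV) (Fa : A → QA)
    (hFs : ∀ a : A, Fv (R.src a) = qsrc (Fa a))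
    (hFt : ∀ a : A, Fv (R.tgt a) = qtgt (Fa a))
    (W : R.SubRep) (hW : R.IsSubrep W) :
    (R.push qsrc qtgt Fv Fa hFs).IsSubrep (R.pushSub Fv W) := by
  intro aq x hx p' hq
  set g : A → ({b : B // R.vtx b = p'} → K) := fun α =>
    if h : Fa α = aq ∧ R.tgt α = p' then
      (fun c => R.mmap α (fun b => x ⟨b.val, by
          show Fv (R.vtx b.val) = qsrc aq
          rw [b.prop, hFs α, h.1]⟩)
        ⟨c.val, by rw [c.prop]; exact h.2.symm⟩)
    else 0 with hg
  have hgmem : ∀ α : A, g α ∈ W p' := by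
    intro α
    by_cases h : Fa α = aq ∧ R.tgt α = p'
    · simp only [hg, dif_pos h]
      obtain ⟨h1, h2⟩ := h
      subst h2
      exact hW α _ (hx (R.src α) (by show Fv (R.src α) = qsrc aq; rw [hFs α, h1]))
    · simp only [hg, dif_neg h]
      exact (W p').zero_mem
  have hsum : (∑ α : A, g α) ∈ W p' := Submodule.sum_mem _ (fun α _ => hgmem α)
  convert hsum using 1
  funext c
  rw [Finset.sum_apply]
  show (∑ α : A, if hα : Fa α = aq then
      (if hc : R.vtx c.val = R.tgt α then
        R.mmap α (fun b => x ⟨b.val, by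
          show Fv (R.vtx b.val) = qsrc aq
          rw [b.prop, hFs α, hα]⟩) ⟨c.val, hc⟩
      else 0) else 0) = ∑ α : A, g α c
  refine Finset.sum_congr rfl (fun α _ => ?_)
  by_cases h1 : Fa α = aq
  · by_cases h2 : R.tgt α = p'
    · simp only [hg, dif_pos h1, dif_pos (show Fa α = aq ∧ R.tgt α = p' from ⟨h1, h2⟩),
        dif_pos (show R.vtx c.val = R.tgt α by rw [c.prop]; exact h2.symm)]
    · simp only [hg, dif_pos h1,
        dif_neg (show ¬R.vtx c.val = R.tgt α by rw [c.prop]; exact fun hh => h2 hh.symm),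
        dif_neg (fun hh : Fa α = aq ∧ R.tgt α = p' => h2 hh.2)]
      rfl
  · simp only [hg, dif_neg h1, dif_neg (fun hh : Fa α = aq ∧ R.tgt α = p' => h1 hh.1)]
    rfl

theorem pushSub_le_of_eq (R : Rep K V0 A B) (Fv : V0 → QV) (U U' : R.SubRep)
    (h : R.pushSub Fv U = R.pushSub Fv U') (p : V0) : U p ≤ U' p := by
  intro x hx
  have hmem : R.ext0 Fv (rfl : Fv p = Fv p) x ∈ R.pushSub Fv U (Fv p) := by
    intro p' hp'
    by_cases hpp : p' = p
    · subst hpp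
      convert hx using 1
      funext c
      show (if h : R.vtx c.val = p' then x ⟨c.val, h⟩ else 0) = x c
      rw [dif_pos c.prop]
    · convert (U p').zero_mem using 1
      funext c
      show (if h : R.vtx c.val = p then x ⟨c.val, h⟩ else 0) = 0
      rw [dif_neg (fun hh => hpp (c.prop.symm.trans hh))]
  rw [h] at hmem
  have hres := hmem p rfl
  convert hres using 1
  funext c
  show x c = (if h : R.vtx c.val = p then x ⟨c.val, h⟩ else 0)
  rw [dif_pos c.prop]

theorem pushSub_mem_cell [Fintype V0] [Fintype A] [Fintype B] [LinearOrder B]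
    (R : Rep K V0 A B) (qsrc qtgt : QA → QV) (Fv : V0 → QV) (Fa : A → QA)
    (hFs : ∀ a : A, Fv (R.src a) = qsrc (Fa a))
    (hFt : ∀ a : A, Fv (R.tgt a) = qtgt (Fa a))
    (β : Finset B) (W : R.SubRep) (hW : W ∈ R.Cell β) :
    R.pushSub Fv W ∈ (R.push qsrc qtgt Fv Fa hFs).Cell β := by
  obtain ⟨hsub, hdim, hcell⟩ := hW
  refine ⟨R.pushSub_isSubrep qsrc qtgt Fv Fa hFs hFt W hsub, ?_, ?_⟩
  · intro q
    refine (R.finrank_pushSub Fv W q).trans ?_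
    have hcount : (Finset.filter (fun b => Fv (R.vtx b) = q) β).card
        = ∑ p ∈ Finset.univ.filter (fun p : V0 => Fv p = q),
            (Finset.filter (fun b => R.vtx b = p) β).card := by
      rw [Finset.card_eq_sum_card_fiberwise (f := R.vtx)
        (t := Finset.univ.filter (fun p : V0 => Fv p = q))
        (fun b hb => Finset.mem_filter.2 ⟨Finset.mem_univ _, (Finset.mem_filter.1 hb).2⟩)]
      refine Finset.sum_congr rfl fun p hp => ?_
      congr 1
      rw [Finset.filter_filter]
      refine Finset.filter_congr fun b _ => ?_
      have hq : Fv p = q := (Finset.mem_filter.1 hp).2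
      constructor
      · exact fun hh => hh.2
      · intro hh
        exact ⟨show Fv (R.vtx b) = q by rw [hh, hq], hh⟩
    exact (Finset.sum_congr rfl fun p _ => hdim p).trans hcount.symm
  · intro q
    choose v hv1 hv2 hv3 using hcell
    refine ⟨fun b0 b1 => if h : R.vtx b1.val = R.vtx b0.val then
        v (R.vtx b0.val) ⟨b0.val, ⟨b0.prop.1, rfl⟩⟩ ⟨b1.val, h⟩ else 0, ?_, ?_, ?_⟩
    · intro b0
      beta_reduce
      rw [dif_pos (rfl : R.vtx b0.val = R.vtx b0.val)]
      exact hv1 _ _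
    · intro b0 b1 hne hcond
      beta_reduce
      by_cases h : R.vtx b1.val = R.vtx b0.val
      · rw [dif_pos h]
        exact hv2 (R.vtx b0.val) _ ⟨b1.val, h⟩ hne hcond
      · rw [dif_neg h]
    · apply le_antisymm
      · intro x hx
        have hxs : x = ∑ p : V0, (if hp : Fv p = q then
            R.ext0 Fv hp (fun c : {b : B // R.vtx b = p} =>
              x ⟨c.val, by show Fv (R.vtx c.val) = q; rw [c.prop]; exact hp⟩) else 0) := by
          funext b1
          symm
          refine (Finset.sum_apply _ _ _).trans ?_
          rw [Finset.sum_eq_single (R.vtx b1.val)]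
          · rw [dif_pos (show Fv (R.vtx b1.val) = q from b1.prop)]
            show (if h : R.vtx b1.val = R.vtx b1.val then
              x ⟨b1.val, show Fv (R.vtx b1.val) = q from b1.prop⟩ else 0) = x b1
            rw [dif_pos rfl]
          · intro p _ hpn
            by_cases hp : Fv p = q
            · rw [dif_pos hp]
              show (if h : R.vtx b1.val = p then
                x ⟨b1.val, by show Fv (R.vtx b1.val) = q; rw [h]; exact hp⟩ else 0) = 0
              rw [dif_neg (fun hh => hpn hh.symm)]
            · rw [dif_neg hp]; rfl
          · intro h; exact absurd (Finset.mem_univ _) h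
        rw [hxs]
        refine Submodule.sum_mem _ (fun p _ => ?_)
        by_cases hp : Fv p = q
        · rw [dif_pos hp]
          have hle : (W p).map (R.ext0 Fv hp) ≤ Submodule.span K (Set.range
              (fun b0 : {b : B // b ∈ β ∧ Fv (R.vtx b) = q} =>
                fun b1 : {b : B // Fv (R.vtx b) = q} =>
                if h : R.vtx b1.val = R.vtx b0.val then
                  v (R.vtx b0.val) ⟨b0.val, ⟨b0.prop.1, rfl⟩⟩ ⟨b1.val, h⟩ else 0)) := by
            rw [hv3 p, Submodule.map_span]
            refine Submodule.span_le.2 ?_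
            rintro _ ⟨_, ⟨i, rfl⟩, rfl⟩
            refine Submodule.subset_span
              ⟨⟨i.val, i.prop.1, by show Fv (R.vtx i.val) = q; rw [i.prop.2]; exact hp⟩, ?_⟩
            obtain ⟨iv, hi1, hi2⟩ := i
            subst hi2
            rfl
          exact hle (Submodule.mem_map_of_mem (hx p hp))
        · rw [dif_neg hp]
          exact Submodule.zero_mem _
      · refine Submodule.span_le.2 ?_
        rintro _ ⟨b0, rfl⟩
        intro p hp
        by_cases hpb : p = R.vtx b0.val
        · subst hpb
          rw [hv3 (R.vtx b0.val)]
          refine Submodule.subset_span ⟨⟨b0.val, b0.prop.1, rfl⟩, ?_⟩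
          funext c
          show v (R.vtx b0.val) ⟨b0.val, b0.prop.1, rfl⟩ c =
            (if h : R.vtx c.val = R.vtx b0.val then
              v (R.vtx b0.val) ⟨b0.val, ⟨b0.prop.1, rfl⟩⟩ ⟨c.val, h⟩ else 0)
          rw [dif_pos c.prop]
        · convert (W p).zero_mem using 1
          funext c
          show (if h : R.vtx c.val = R.vtx b0.val then
              v (R.vtx b0.val) ⟨b0.val, ⟨b0.prop.1, rfl⟩⟩ ⟨c.val, h⟩ else 0) = (0 : K)
          exact dif_neg (fun hh => hpb (c.prop.symm.trans hh))

end Rep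
end QGr

open QGr in
/-- Let `F : T → Q` be a morphism of quivers and `M` a representation of `T`
with ordered basis `B`.  Then (a) the push-forward `F_*V` of a subrepresentation `V` of `M`
is a subrepresentation of `F_*M`; (b) `V ↦ F_*V` is injective on `Gr_e(M)` and maps it into
`Gr_{F(e)}(F_*M)`; (c) it maps the Schubert cell `C_β^M` into `C_β^{F_*M}`. -/
theorem pushforward_subrepresentations
    {K V0 A B QV QA : Type} [Field K] [Fintype V0] [Fintype A] [Fintype B]
    [Fintype QV] [Fintype QA] [LinearOrder B]
    (R : Rep K V0 A B) (hlin : R.Linear)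
    (qsrc qtgt : QA → QV) (Fv : V0 → QV) (Fa : A → QA)
    (hFs : ∀ a : A, Fv (R.src a) = qsrc (Fa a))
    (hFt : ∀ a : A, Fv (R.tgt a) = qtgt (Fa a)) :
    (∀ W : R.SubRep, R.IsSubrep W →
      (R.push qsrc qtgt Fv Fa hFs).IsSubrep (R.pushSub Fv W)) ∧
    (∀ e : V0 → ℕ, ∀ W ∈ R.Gr e,
      R.pushSub Fv W ∈ (R.push qsrc qtgt Fv Fa hFs).Gr
        (fun q => ∑ p ∈ Finset.univ.filter (fun p : V0 => Fv p = q), e p)) ∧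
    (∀ e : V0 → ℕ, ∀ W W' : R.SubRep, W ∈ R.Gr e → W' ∈ R.Gr e →
      R.pushSub Fv W = R.pushSub Fv W' → W = W') ∧
    (∀ β : Finset B, ∀ W ∈ R.Cell β,
      R.pushSub Fv W ∈ (R.push qsrc qtgt Fv Fa hFs).Cell β) := by
  refine ⟨fun W hW => R.pushSub_isSubrep qsrc qtgt Fv Fa hFs hFt W hW, ?_, ?_, ?_⟩
  · intro e W hW
    exact ⟨R.pushSub_isSubrep qsrc qtgt Fv Fa hFs hFt W hW.1,
      fun q => (R.finrank_pushSub Fv W q).trans (Finset.sum_congr rfl fun p _ => hW.2 p)⟩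
  · intro e W W' _ _ h
    funext p
    exact le_antisymm (R.pushSub_le_of_eq Fv W W' h p) (R.pushSub_le_of_eq Fv W' W h.symm p)
  · intro β W hW
    exact R.pushSub_mem_cell qsrc qtgt Fv Fa hFs hFt β W hW
end
end

section
/- Let F : T → Q be a winding of quivers and M a representation of T over a field K with ordered basis B inducing an ordering of T, and suppose F is strictly ordered with respect to B. Let β ⊆ B. For W ∈ C_β^{F_*M}, each subspace W_q (q a vertex of Q) has a unique spanning family (w_b)_{b ∈ β ∩ B_q} with w_b = b + Σ μ_{b',b} b', the sum over b' ∈ B_q ∖ β with b' < b. For each vertex p of T and b ∈ β_p, let v_b ∈ M_p be the component of w_b in the direct summand M_p of (F_*M)_{F(p)}, and set V_p = span{v_b : b ∈ β_p}. Then V = (V_p)_{p∈T0} is a subrepresentation of M lying in the Schubert cell C_β^M; the resulting map π : C_β^{F_*M} → C_β^M is a retraction of the injection ι : C_β^M → C_β^{F_*M}, V ↦ F_*V, i.e. π(ι(V)) = V for all V ∈ C_β^M. -/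
open scoped Classical

noncomputable section

namespace QGr

/-- An echelon family of generating vectors with pivots `β`, for a point of a Schubert cell
of the push-forward representation: `w b' = b' + Σ μ_{b,b'} b`, the sum over basis elements
`b < b'` (in the same fibre over `Q`) with `b ∉ β`. -/
def EchelonFam {K V0 A B QV : Type} [Field K] [LinearOrder B]
    (R : Rep K V0 A B) (Fv : V0 → QV) (β : Finset B)
    (w : ∀ b' : {c : B // c ∈ β}, {b : B // Fv (R.vtx b) = Fv (R.vtx b'.val)} → K) : Prop :=
  (∀ b' : {c : B // c ∈ β}, w b' ⟨b'.val, rfl⟩ = 1) ∧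
  (∀ (b' : {c : B // c ∈ β}) (b : {b : B // Fv (R.vtx b) = Fv (R.vtx b'.val)}),
    b.val ∈ β → b.val ≠ b'.val → w b' b = 0) ∧
  (∀ (b' : {c : B // c ∈ β}) (b : {b : B // Fv (R.vtx b) = Fv (R.vtx b'.val)}),
    b'.val < b.val → w b' b = 0)

/-- The family `w` spans the collection of subspaces `W` over the vertices of `Q`. -/
def SpansQ {K V0 A B QV : Type} [Field K] [LinearOrder B]
    (R : Rep K V0 A B) (Fv : V0 → QV) (β : Finset B)
    (w : ∀ b' : {c : B // c ∈ β}, {b : B // Fv (R.vtx b) = Fv (R.vtx b'.val)} → K)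
    (W : ∀ q : QV, Submodule K ({b : B // Fv (R.vtx b) = q} → K)) : Prop :=
  ∀ q : QV, W q = Submodule.span K (Set.range
    (fun b' : {c : B // c ∈ β ∧ Fv (R.vtx c) = q} =>
      fun b : {b : B // Fv (R.vtx b) = q} =>
        w ⟨b'.val, b'.prop.1⟩ ⟨b.val, b.prop.trans b'.prop.2.symm⟩))

/-- The collection of subspaces of `M` obtained from the diagonal components of the echelon
family `w`: `V_p` is spanned by the components in `M_p` of the vectors `w b'` with
`b' ∈ β ∩ B_p`. -/
def extractDiag {K V0 A B QV : Type} [Field K] [LinearOrder B]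
    (R : Rep K V0 A B) (Fv : V0 → QV) (β : Finset B)
    (w : ∀ b' : {c : B // c ∈ β}, {b : B // Fv (R.vtx b) = Fv (R.vtx b'.val)} → K) :
    R.SubRep :=
  fun p => Submodule.span K (Set.range
    (fun b' : {c : B // c ∈ β ∧ R.vtx c = p} =>
      fun b : {b : B // R.vtx b = p} =>
        w ⟨b'.val, b'.prop.1⟩ ⟨b.val, congrArg Fv (b.prop.trans b'.prop.2.symm)⟩))


/-! ### Auxiliary lemmas for the proof -/

section PivotGeneric
variable {K : Type} [Field K]

lemma span_pivot_repr {ι γ : Type} [Fintype ι] [DecidableEq ι]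
    (f : ι → γ → K) (pv : ι → γ)
    (hf : ∀ i j, f i (pv j) = if j = i then 1 else 0)
    (x : γ → K) (hx : x ∈ Submodule.span K (Set.range f)) :
    ∑ i, x (pv i) • f i = x := by
  obtain ⟨c, hc⟩ := (Submodule.mem_span_range_iff_exists_fun K).mp hx
  have hcoef : ∀ j, x (pv j) = c j := by
    intro j
    have h := congrFun hc (pv j)
    simp only [Finset.sum_apply, Pi.smul_apply, smul_eq_mul, hf, mul_ite, mul_one, mul_zero,
      Finset.sum_ite_eq, Finset.mem_univ, if_true] at h
    exact h.symm
  calc ∑ i, x (pv i) • f i = ∑ i, c i • f i :=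
        Finset.sum_congr rfl fun i _ => by rw [hcoef]
    _ = x := hc

lemma span_pivot_zero {ι γ : Type} [Fintype ι] [DecidableEq ι]
    (f : ι → γ → K) (pv : ι → γ)
    (hf : ∀ i j, f i (pv j) = if j = i then 1 else 0)
    (x : γ → K) (hx : x ∈ Submodule.span K (Set.range f))
    (hz : ∀ i, x (pv i) = 0) : x = 0 := by
  have h := span_pivot_repr f pv hf x hx
  rw [← h]
  exact Finset.sum_eq_zero fun i _ => by rw [hz i, zero_smul]

lemma span_pivot_finrank {ι γ : Type} [Fintype ι] [DecidableEq ι]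
    (f : ι → γ → K) (pv : ι → γ)
    (hf : ∀ i j, f i (pv j) = if j = i then 1 else 0) :
    Module.finrank K (Submodule.span K (Set.range f)) = Fintype.card ι := by
  have hli : LinearIndependent K f := by
    rw [Fintype.linearIndependent_iff]
    intro g hg i
    have h := congrFun hg (pv i)
    simpa only [Finset.sum_apply, Pi.smul_apply, smul_eq_mul, hf, mul_ite, mul_one, mul_zero,
      Finset.sum_ite_eq, Finset.mem_univ, if_true, Pi.zero_apply] using h
  exact finrank_span_eq_card hli

end PivotGeneric

set_option linter.unusedSectionVars false

section AuxFam

variable {K V0 A B QV QA : Type} [Field K] [Fintype A] [Fintype B] [LinearOrder B]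

/-- The spanning family at a vertex of `Q` (as in `SpansQ`). -/
def famQ (R : Rep K V0 A B) (Fv : V0 → QV) (β : Finset B)
    (w : ∀ b' : {c : B // c ∈ β}, {b : B // Fv (R.vtx b) = Fv (R.vtx b'.val)} → K)
    (q : QV) :
    {c : B // c ∈ β ∧ Fv (R.vtx c) = q} → ({b : B // Fv (R.vtx b) = q} → K) :=
  fun b' b => w ⟨b'.val, b'.prop.1⟩ ⟨b.val, b.prop.trans b'.prop.2.symm⟩

/-- The diagonal family at a vertex of `T` (as in `extractDiag`). -/
def famP (R : Rep K V0 A B) (Fv : V0 → QV) (β : Finset B)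
    (w : ∀ b' : {c : B // c ∈ β}, {b : B // Fv (R.vtx b) = Fv (R.vtx b'.val)} → K)
    (p : V0) :
    {c : B // c ∈ β ∧ R.vtx c = p} → ({b : B // R.vtx b = p} → K) :=
  fun b' b => w ⟨b'.val, b'.prop.1⟩ ⟨b.val, congrArg Fv (b.prop.trans b'.prop.2.symm)⟩

variable (R : Rep K V0 A B) (Fv : V0 → QV) (β : Finset B)
  (w : ∀ b' : {c : B // c ∈ β}, {b : B // Fv (R.vtx b) = Fv (R.vtx b'.val)} → K)

lemma extractDiag_eq (p : V0) :
    extractDiag R Fv β w p = Submodule.span K (Set.range (famP R Fv β w p)) := rfl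

lemma spansQ_iff (W : ∀ q : QV, Submodule K ({b : B // Fv (R.vtx b) = q} → K)) :
    SpansQ R Fv β w W ↔ ∀ q, W q = Submodule.span K (Set.range (famQ R Fv β w q)) :=
  Iff.rfl

lemma ech_delta (hw : EchelonFam R Fv β w) (b' : {c : B // c ∈ β}) (j : B) (hj : j ∈ β)
    (h : Fv (R.vtx j) = Fv (R.vtx b'.val)) :
    w b' ⟨j, h⟩ = if j = b'.val then 1 else 0 := by
  by_cases he : j = b'.val
  · rw [if_pos he]
    subst he
    exact hw.1 b'
  · rw [if_neg he]
    exact hw.2.1 b' ⟨j, h⟩ hj he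

lemma famQ_delta (hw : EchelonFam R Fv β w) (q : QV)
    (i j : {c : B // c ∈ β ∧ Fv (R.vtx c) = q}) :
    famQ R Fv β w q i ⟨j.val, j.prop.2⟩ = if j = i then 1 else 0 := by
  rw [show famQ R Fv β w q i ⟨j.val, j.prop.2⟩
      = w ⟨i.val, i.prop.1⟩ ⟨j.val, j.prop.2.trans i.prop.2.symm⟩ from rfl]
  rw [ech_delta R Fv β w hw ⟨i.val, i.prop.1⟩ j.val j.prop.1]
  simp [Subtype.ext_iff]

lemma famP_delta (hw : EchelonFam R Fv β w) (p : V0)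
    (i j : {c : B // c ∈ β ∧ R.vtx c = p}) :
    famP R Fv β w p i ⟨j.val, j.prop.2⟩ = if j = i then 1 else 0 := by
  rw [show famP R Fv β w p i ⟨j.val, j.prop.2⟩
      = w ⟨i.val, i.prop.1⟩ ⟨j.val, congrArg Fv (j.prop.2.trans i.prop.2.symm)⟩ from rfl]
  rw [ech_delta R Fv β w hw ⟨i.val, i.prop.1⟩ j.val j.prop.1]
  simp [Subtype.ext_iff]

lemma card_pivots (p : V0) :
    Fintype.card {c : B // c ∈ β ∧ R.vtx c = p} = (β.filter fun b => R.vtx b = p).card := by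
  rw [Fintype.card_subtype]
  congr 1
  ext c
  simp

lemma extract_finrank (hw : EchelonFam R Fv β w) (p : V0) :
    Module.finrank K (extractDiag R Fv β w p) = (β.filter fun b => R.vtx b = p).card := by
  rw [extractDiag_eq, span_pivot_finrank (famP R Fv β w p) (fun j => ⟨j.val, j.prop.2⟩)
    (fun i j => famP_delta R Fv β w hw p i j), card_pivots]

lemma extract_incell (hw : EchelonFam R Fv β w) :
    R.InCell β (extractDiag R Fv β w) := by
  intro p
  refine ⟨famP R Fv β w p, ?_, ?_, rfl⟩
  · intro b0
    exact hw.1 ⟨b0.val, b0.prop.1⟩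
  · intro b0 b1 hne hnot
    by_cases hb1 : b1.val ∈ β
    · exact hw.2.1 ⟨b0.val, b0.prop.1⟩
        ⟨b1.val, congrArg Fv (b1.prop.trans b0.prop.2.symm)⟩ hb1 hne
    · have hlt : b0.val < b1.val := by
        rcases lt_trichotomy b1.val b0.val with h | h | h
        · exact absurd ⟨h, hb1⟩ hnot
        · exact absurd h hne
        · exact h
      exact hw.2.2 ⟨b0.val, b0.prop.1⟩
        ⟨b1.val, congrArg Fv (b1.prop.trans b0.prop.2.symm)⟩ hlt

end AuxFam


section AuxMain

variable {K V0 A B QV QA : Type} [Field K] [Fintype A] [Fintype B] [LinearOrder B]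
  (R : Rep K V0 A B)
  (qsrc qtgt : QA → QV) (Fv : V0 → QV) (Fa : A → QA)
  (hFs : ∀ a : A, Fv (R.src a) = qsrc (Fa a))
  (β : Finset B)

lemma exists_fam (W : (R.push qsrc qtgt Fv Fa hFs).SubRep)
    (hcell : (R.push qsrc qtgt Fv Fa hFs).InCell β W) :
    ∃ w : ∀ b' : {c : B // c ∈ β}, {b : B // Fv (R.vtx b) = Fv (R.vtx b'.val)} → K,
      EchelonFam R Fv β w ∧ SpansQ R Fv β w W := by
  choose v hv1 hv2 hvspan using hcell
  refine ⟨fun b' bb => v (Fv (R.vtx b'.val)) ⟨b'.val, b'.prop, rfl⟩ ⟨bb.val, bb.prop⟩,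
    ⟨?_, ?_, ?_⟩, ?_⟩
  · intro b'
    exact hv1 (Fv (R.vtx b'.val)) ⟨b'.val, b'.prop, rfl⟩
  · intro b' bb hbβ hne
    exact hv2 (Fv (R.vtx b'.val)) ⟨b'.val, b'.prop, rfl⟩ ⟨bb.val, bb.prop⟩ hne
      (fun h => h.2 hbβ)
  · intro b' bb hlt
    exact hv2 (Fv (R.vtx b'.val)) ⟨b'.val, b'.prop, rfl⟩ ⟨bb.val, bb.prop⟩ hlt.ne'
      (fun h => lt_asymm hlt h.1)
  · intro q
    rw [hvspan q]
    have hfun : (fun (b'' : {c : B // c ∈ β ∧ Fv (R.vtx c) = q}) =>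
        (fun (bb : {b : B // Fv (R.vtx b) = q}) =>
          v (Fv (R.vtx b''.val)) ⟨b''.val, b''.prop.1, rfl⟩
            ⟨bb.val, bb.prop.trans b''.prop.2.symm⟩)) = v q := by
      funext b''
      obtain ⟨bv, hb1, hb2⟩ := b''
      subst hb2
      rfl
    exact congrArg (fun f => Submodule.span K (Set.range f)) hfun.symm

lemma fam_unique (W : ∀ q : QV, Submodule K ({b : B // Fv (R.vtx b) = q} → K))
    (w w' : ∀ b' : {c : B // c ∈ β}, {b : B // Fv (R.vtx b) = Fv (R.vtx b'.val)} → K)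
    (hw : EchelonFam R Fv β w) (hw' : EchelonFam R Fv β w')
    (hs : SpansQ R Fv β w W) (hs' : SpansQ R Fv β w' W) : w = w' := by
  funext b'
  have h1 : w b' ∈ Submodule.span K (Set.range (famQ R Fv β w (Fv (R.vtx b'.val)))) :=
    Submodule.subset_span ⟨⟨b'.val, b'.prop, rfl⟩, rfl⟩
  have e : Submodule.span K (Set.range (famQ R Fv β w (Fv (R.vtx b'.val))))
      = Submodule.span K (Set.range (famQ R Fv β w' (Fv (R.vtx b'.val)))) :=
    (hs (Fv (R.vtx b'.val))).symm.trans (hs' (Fv (R.vtx b'.val)))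
  have h2 : w' b' ∈ Submodule.span K (Set.range (famQ R Fv β w (Fv (R.vtx b'.val)))) := by
    rw [e]
    exact Submodule.subset_span ⟨⟨b'.val, b'.prop, rfl⟩, rfl⟩
  have hdz : w b' - w' b' = 0 := by
    refine span_pivot_zero _ (fun j => ⟨j.val, j.prop.2⟩)
      (fun i j => famQ_delta R Fv β w hw _ i j) _ (Submodule.sub_mem _ h1 h2) ?_
    intro i
    show w b' ⟨i.val, i.prop.2⟩ - w' b' ⟨i.val, i.prop.2⟩ = 0
    rw [show w b' ⟨i.val, i.prop.2⟩ = if i.val = b'.val then 1 else 0 from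
      ech_delta R Fv β w hw b' i.val i.prop.1 i.prop.2]
    rw [show w' b' ⟨i.val, i.prop.2⟩ = if i.val = b'.val then 1 else 0 from
      ech_delta R Fv β w' hw' b' i.val i.prop.1 i.prop.2]
    rw [sub_self]
  exact sub_eq_zero.mp hdz

lemma extract_subrep (hlin : R.Linear)
    (hFt : ∀ a : A, Fv (R.tgt a) = qtgt (Fa a))
    (hwind : ∀ α α' : A, α ≠ α' → Fa α = Fa α' →
      R.src α ≠ R.src α' ∧ R.tgt α ≠ R.tgt α')
    (hindord : ∀ p q : V0, p ≠ q → R.vlt p q ∨ R.vlt q p)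
    (hso : R.StrictlyOrdered Fa)
    (W : (R.push qsrc qtgt Fv Fa hFs).SubRep)
    (hWsub : (R.push qsrc qtgt Fv Fa hFs).IsSubrep W)
    (w : ∀ b' : {c : B // c ∈ β}, {b : B // Fv (R.vtx b) = Fv (R.vtx b'.val)} → K)
    (hw : EchelonFam R Fv β w) (hspan : SpansQ R Fv β w W) :
    R.IsSubrep (extractDiag R Fv β w) := by
  intro a x hx
  rw [extractDiag_eq] at hx
  obtain ⟨c, hc⟩ := (Submodule.mem_span_range_iff_exists_fun K).mp hx
  rw [← hc]
  have hmsum : (IsLinearMap.mk' (R.mmap a) (hlin a))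
      (∑ i, c i • famP R Fv β w (R.src a) i)
      = ∑ i, c i • R.mmap a (famP R Fv β w (R.src a) i) := by
    rw [map_sum]
    exact Finset.sum_congr rfl fun i _ => (IsLinearMap.mk' (R.mmap a) (hlin a)).map_smul _ _
  rw [show R.mmap a (∑ i, c i • famP R Fv β w (R.src a) i)
    = (IsLinearMap.mk' (R.mmap a) (hlin a)) (∑ i, c i • famP R Fv β w (R.src a) i) from rfl]
  rw [hmsum]
  refine Submodule.sum_mem _ fun i _ => Submodule.smul_mem _ _ ?_
  -- main step : R.mmap a (famP … i) ∈ extractDiag R Fv β w (R.tgt a)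
  have h0 : Fv (R.vtx i.val) = qsrc (Fa a) := by rw [i.prop.2]; exact hFs a
  -- the vector of W (qsrc (Fa a)) whose diagonal component is famP i
  set x0 : {cc : B // Fv (R.vtx cc) = qsrc (Fa a)} → K :=
    fun cc => w ⟨i.val, i.prop.1⟩ ⟨cc.val, cc.prop.trans h0.symm⟩ with hx0def
  have hx0 : x0 ∈ W (qsrc (Fa a)) := by
    rw [hspan (qsrc (Fa a))]
    exact (Submodule.subset_span ⟨⟨i.val, i.prop.1, h0⟩, rfl⟩ :
      x0 ∈ Submodule.span K (Set.range (famQ R Fv β w (qsrc (Fa a)))))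
  have hu : (R.push qsrc qtgt Fv Fa hFs).mmap (Fa a) x0 ∈ W (qtgt (Fa a)) :=
    hWsub (Fa a) x0 hx0
  rw [hspan (qtgt (Fa a))] at hu
  obtain ⟨c', hc'⟩ := (Submodule.mem_span_range_iff_exists_fun K
    (M := {b : B // Fv (R.vtx b) = qtgt (Fa a)} → K)).mp hu
  -- u at coordinates over the target vertex computes M_a (famP i)
  have hcoord : ∀ b₁ : {cc : B // R.vtx cc = R.tgt a},
      R.mmap a (famP R Fv β w (R.src a) i) b₁ =
        (R.push qsrc qtgt Fv Fa hFs).mmap (Fa a) x0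
          ⟨b₁.val, by show Fv (R.vtx b₁.val) = qtgt (Fa a); rw [b₁.prop]; exact hFt a⟩ := by
    intro b₁
    show R.mmap a (famP R Fv β w (R.src a) i) b₁
        = ∑ α : A, if hα : Fa α = Fa a then
            (if hcnd : R.vtx b₁.val = R.tgt α then
              R.mmap α (fun b => x0 ⟨b.val, by rw [b.prop, hFs α, hα]⟩) ⟨b₁.val, hcnd⟩
            else 0) else 0
    rw [Finset.sum_eq_single_of_mem a (Finset.mem_univ a)]
    · rw [dif_pos rfl, dif_pos b₁.prop]
      rfl
    · intro α _ hne
      by_cases hα : Fa α = Fa a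
      · by_cases hcα : R.vtx b₁.val = R.tgt α
        · exact absurd (hcα.symm.trans b₁.prop) (hwind α a hne hα).2
        · rw [dif_pos hα, dif_neg hcα]
      · rw [dif_neg hα]
  -- expansion of M_a (famP i) in terms of the w-family over the target vertex of Q
  have hrepr : R.mmap a (famP R Fv β w (R.src a) i)
      = ∑ j : {cc : B // cc ∈ β ∧ Fv (R.vtx cc) = qtgt (Fa a)},
          c' j • (fun b₁ : {cc : B // R.vtx cc = R.tgt a} =>
            famQ R Fv β w (qtgt (Fa a)) j
              ⟨b₁.val, by rw [b₁.prop]; exact hFt a⟩) := by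
    funext b₁
    rw [hcoord b₁, ← hc']
    refine (Finset.sum_apply _ _ _ : (∑ j, c' j • famQ R Fv β w (qtgt (Fa a)) j)
      ⟨b₁.val, by rw [b₁.prop]; exact hFt a⟩ = _).trans ?_
    exact (Finset.sum_apply (M := fun _ : {cc : B // R.vtx cc = R.tgt a} => K) b₁ Finset.univ
      (fun j => c' j • fun b₂ : {cc : B // R.vtx cc = R.tgt a} =>
        famQ R Fv β w (qtgt (Fa a)) j ⟨b₂.val, by rw [b₂.prop]; exact hFt a⟩)).symm
  rw [hrepr]
  refine Submodule.sum_mem _ fun j _ => ?_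
  by_cases hj : R.vtx j.val = R.tgt a
  · -- diagonal contribution
    refine Submodule.smul_mem _ _ (Submodule.subset_span ⟨⟨j.val, j.prop.1, hj⟩, rfl⟩)
  · -- off-diagonal contribution vanishes
    have hzero : (c' j • (fun b₁ : {cc : B // R.vtx cc = R.tgt a} =>
        famQ R Fv β w (qtgt (Fa a)) j
          ⟨b₁.val, by rw [b₁.prop]; exact hFt a⟩)) = 0 := by
      funext b₁
      show c' j * w ⟨j.val, j.prop.1⟩
        ⟨b₁.val, ((show Fv (R.vtx b₁.val) = qtgt (Fa a) by
          rw [b₁.prop]; exact hFt a)).trans j.prop.2.symm⟩ = 0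
      rcases hindord (R.vtx j.val) (R.tgt a) hj with h1 | h2
      · -- the vertex of j precedes R.tgt a : the w-entry vanishes
        rw [hw.2.2 ⟨j.val, j.prop.1⟩ _ (h1 j.val b₁.val rfl b₁.prop), mul_zero]
      · -- R.tgt a precedes the vertex of j : the coefficient c' j vanishes
        have hu0 : (R.push qsrc qtgt Fv Fa hFs).mmap (Fa a) x0 ⟨j.val, j.prop.2⟩ = 0 := by
          show (∑ α : A, if hα : Fa α = Fa a then
              (if hcnd : R.vtx j.val = R.tgt α then
                R.mmap α (fun b => x0 ⟨b.val, by rw [b.prop, hFs α, hα]⟩) ⟨j.val, hcnd⟩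
              else 0) else 0) = 0
          refine Finset.sum_eq_zero fun α _ => ?_
          by_cases hα : Fa α = Fa a
          · by_cases hcα : R.vtx j.val = R.tgt α
            · have hαa : α ≠ a := fun he => hj (hcα.trans (congrArg R.tgt he))
              rcases hso a α (Ne.symm hαa) hα.symm with ⟨hs1, ht1⟩ | ⟨hs2, ht2⟩
              · -- src a precedes src α : the restriction of x0 to src α is 0
                have hF : (fun bb : {bb : B // R.vtx bb = R.src α} =>
                    x0 ⟨bb.val, by rw [bb.prop, hFs α, hα]⟩)
                    = (0 : {bb : B // R.vtx bb = R.src α} → K) := by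
                  funext bb
                  exact hw.2.2 ⟨i.val, i.prop.1⟩ _ (hs1 i.val bb.val i.prop.2 bb.prop)
                have hzz := congrArg (fun z => R.mmap α z ⟨j.val, hcα⟩) hF
                rw [dif_pos hα, dif_pos hcα]
                refine hzz.trans ?_
                show R.mmap α (0 : {bb : B // R.vtx bb = R.src α} → K) ⟨j.val, hcα⟩ = 0
                rw [(hlin α).map_zero]
                rfl
              · -- tgt α precedes tgt a : contradiction with h2 via witnesses
                exact absurd (ht2 j.val b₁.val hcα b₁.prop)
                  (not_lt.mpr (le_of_lt (h2 b₁.val j.val b₁.prop rfl)))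
            · rw [dif_pos hα, dif_neg hcα]
          · rw [dif_neg hα]
        have hcj : c' j = 0 := by
          have hpiv := congrFun hc' ⟨j.val, j.prop.2⟩
          replace hpiv := hpiv.trans hu0
          rw [Finset.sum_apply] at hpiv
          have hterm : ∀ k ∈ (Finset.univ : Finset {cc : B // cc ∈ β ∧
              Fv (R.vtx cc) = qtgt (Fa a)}),
              (c' k • fun b : {b : B // Fv (R.vtx b) = qtgt (Fa a)} =>
                w ⟨k.val, k.prop.1⟩ ⟨b.val, b.prop.trans k.prop.2.symm⟩)
                ⟨j.val, j.prop.2⟩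
                = if j = k then c' k else 0 := by
            intro k _
            show c' k * w ⟨k.val, k.prop.1⟩ ⟨j.val, j.prop.2.trans k.prop.2.symm⟩
              = if j = k then c' k else 0
            rw [ech_delta R Fv β w hw ⟨k.val, k.prop.1⟩ j.val j.prop.1
              (j.prop.2.trans k.prop.2.symm)]
            by_cases hjk : j = k
            · rw [if_pos (congrArg Subtype.val hjk), if_pos hjk, mul_one]
            · rw [if_neg (fun hv => hjk (Subtype.ext hv)), if_neg hjk, mul_zero]
          rw [Finset.sum_congr rfl hterm, Finset.sum_ite_eq] at hpiv
          simpa using hpiv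
        rw [hcj, zero_mul]
    rw [hzero]
    exact Submodule.zero_mem _

lemma extract_eq (V : R.SubRep)
    (hVrank : ∀ p : V0, Module.finrank K (V p) = (β.filter fun b => R.vtx b = p).card)
    (w : ∀ b' : {c : B // c ∈ β}, {b : B // Fv (R.vtx b) = Fv (R.vtx b'.val)} → K)
    (hw : EchelonFam R Fv β w) (hs : SpansQ R Fv β w (R.pushSub Fv V)) :
    extractDiag R Fv β w = V := by
  funext p
  have hle : extractDiag R Fv β w p ≤ V p := by
    rw [extractDiag_eq, Submodule.span_le]
    rintro _ ⟨i, rfl⟩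
    have hmem : w ⟨i.val, i.prop.1⟩ ∈ R.pushSub Fv V (Fv (R.vtx i.val)) := by
      rw [hs (Fv (R.vtx i.val))]
      exact Submodule.subset_span ⟨⟨i.val, i.prop.1, rfl⟩, rfl⟩
    have hmem2 : ∀ (p₀ : V0) (hq : Fv p₀ = Fv (R.vtx i.val)),
        (fun b : {b : B // R.vtx b = p₀} =>
          w ⟨i.val, i.prop.1⟩ ⟨b.val, by rw [b.prop]; exact hq⟩) ∈ V p₀ := hmem
    exact hmem2 p (congrArg Fv i.prop.2).symm
  exact Submodule.eq_of_le_of_finrank_le hle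
    (by rw [hVrank p, extract_finrank R Fv β w hw p])

end AuxMain

end QGr

open QGr in
/-- Let `F : T → Q` be a winding, strictly ordered with respect to the
ordered basis `B` (which induces an ordering of `T`), and `β ⊆ B`.  Every point `W` of
`C_β^{F_*M}` has a unique echelon spanning family `w`; the collection `V` of the spans of the
diagonal components of `w` lies in `C_β^M`, and the resulting map
`π : C_β^{F_*M} → C_β^M` is a retraction of `ι : C_β^M → C_β^{F_*M}`, `V ↦ F_*V`. -/
theorem pushforward_cell_retraction
    {K V0 A B QV QA : Type} [Field K] [Fintype V0] [Fintype A] [Fintype B]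
    [Fintype QV] [Fintype QA] [LinearOrder B]
    (R : Rep K V0 A B) (hlin : R.Linear)
    (qsrc qtgt : QA → QV) (Fv : V0 → QV) (Fa : A → QA)
    (hFs : ∀ a : A, Fv (R.src a) = qsrc (Fa a))
    (hFt : ∀ a : A, Fv (R.tgt a) = qtgt (Fa a))
    (hwind : ∀ α α' : A, α ≠ α' → Fa α = Fa α' →
      R.src α ≠ R.src α' ∧ R.tgt α ≠ R.tgt α')
    (hindord : ∀ p q : V0, p ≠ q → R.vlt p q ∨ R.vlt q p)
    (hso : R.StrictlyOrdered Fa)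
    (β : Finset B) :
    (∀ W ∈ (R.push qsrc qtgt Fv Fa hFs).Cell β,
      ∃! w : ∀ b' : {c : B // c ∈ β}, {b : B // Fv (R.vtx b) = Fv (R.vtx b'.val)} → K,
        EchelonFam R Fv β w ∧ SpansQ R Fv β w W) ∧
    (∀ W ∈ (R.push qsrc qtgt Fv Fa hFs).Cell β,
      ∀ w, EchelonFam R Fv β w → SpansQ R Fv β w W →
        extractDiag R Fv β w ∈ R.Cell β) ∧
    (∀ V ∈ R.Cell β,
      ∀ w, EchelonFam R Fv β w → SpansQ R Fv β w (R.pushSub Fv V) →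
        extractDiag R Fv β w = V) := by
  refine ⟨?_, ?_, ?_⟩
  · intro W hW
    obtain ⟨w₀, hech, hsp⟩ := exists_fam R qsrc qtgt Fv Fa hFs β W hW.2.2
    exact ⟨w₀, ⟨hech, hsp⟩,
      fun w' hw' => fam_unique R Fv β W w' w₀ hw'.1 hech hw'.2 hsp⟩
  · intro W hW w hwE hwS
    exact ⟨extract_subrep R qsrc qtgt Fv Fa hFs β hlin hFt hwind hindord hso
        W hW.1 w hwE hwS,
      fun p => extract_finrank R Fv β w hwE p,
      extract_incell R Fv β w hwE⟩
  · intro V hV w hwE hwS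
    exact extract_eq R Fv β V hV.2.1 w hwE hwS
end
end

section
/- Let Q be a quiver that is the disjoint union of two subquivers S and T (no vertices or arrows in common, and no arrows between them), and let M be a representation of Q over a field K with ordered basis B. Then for every subset β ⊆ B, the map V ↦ ((V_p)_{p∈S0}, (V_p)_{p∈T0}) is a bijection from the Schubert cell C_β^M onto the product C_{β_S}^{M_S} × C_{β_T}^{M_T}, where M_S, M_T are the restrictions of M to S, T and β_S = β ∩ M_S, β_T = β ∩ M_T. -/
open scoped Classical

noncomputable section

section Aux

open QGr

variable {K V0 A B : Type} [Field K] [LinearOrder B]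

private lemma aux_filter_eq (R : Rep K V0 A B) (S0 : Set V0) (β : Finset B)
    (p : V0) (hp : p ∈ S0) :
    ((β.filter fun b => R.vtx b ∈ S0).filter fun b => R.vtx b = p)
      = β.filter fun b => R.vtx b = p := by
  ext b
  simp only [Finset.mem_filter]
  constructor
  · rintro ⟨⟨hb, -⟩, h2⟩; exact ⟨hb, h2⟩
  · rintro ⟨hb, h2⟩; exact ⟨⟨hb, h2 ▸ hp⟩, h2⟩

private lemma aux_res (R : Rep K V0 A B) (S0 : Set V0) (S1 : Set A) (β : Finset B)
    {W : R.SubRep} (hW : W ∈ R.Cell β) :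
    R.resOn S0 W ∈ R.CellOn S0 S1 (β.filter fun b => R.vtx b ∈ S0) := by
  obtain ⟨h1, h2, h3⟩ := hW
  refine ⟨fun a _ h1' h2' x hx => h1 a x hx, ?_, ?_⟩
  · intro p
    show Module.finrank K ↥(W ↑p) = _
    rw [h2 ↑p, aux_filter_eq R S0 β ↑p p.prop]
  · intro p
    obtain ⟨v, hv1, hv2, hv3⟩ := h3 ↑p
    have key : ∀ b : B, R.vtx b = ↑p →
        (b ∈ β.filter (fun b => R.vtx b ∈ S0) ↔ b ∈ β) := by
      intro b hb
      simp [Finset.mem_filter, hb, p.prop]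
    refine ⟨v ∘ (fun b0 => ⟨b0.val, (key _ b0.prop.2).mp b0.prop.1, b0.prop.2⟩),
        ?_, ?_, ?_⟩
    · intro b0; exact hv1 _
    · intro b0 b1 hne hc
      refine hv2 _ b1 hne ?_
      rintro ⟨hlt, hnb⟩
      exact hc ⟨hlt, fun hmem => hnb ((key b1.val b1.prop).mp hmem)⟩
    · show W ↑p = _
      rw [hv3]
      congr 1
      refine (Function.Surjective.range_comp ?_ v).symm
      rintro ⟨b, hb, hbp⟩
      exact ⟨⟨b, (key b hbp).mpr hb, hbp⟩, rfl⟩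

private def glueSub (R : Rep K V0 A B) (S0 T0 : Set V0)
    (hT0 : ∀ p : V0, p ∉ S0 → p ∈ T0)
    (WS : R.SubRepOn S0) (WT : R.SubRepOn T0) : R.SubRep :=
  fun p => if h : p ∈ S0 then WS ⟨p, h⟩ else WT ⟨p, hT0 p h⟩

private lemma aux_glue (R : Rep K V0 A B)
    (S0 T0 : Set V0) (S1 T1 : Set A)
    (hT0 : ∀ p : V0, p ∉ S0 → p ∈ T0) (hVd : Disjoint S0 T0)
    (hA : S1 ∪ T1 = Set.univ)
    (hS : ∀ a ∈ S1, R.src a ∈ S0 ∧ R.tgt a ∈ S0)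
    (hT : ∀ a ∈ T1, R.src a ∈ T0 ∧ R.tgt a ∈ T0)
    (β : Finset B)
    {WS : R.SubRepOn S0} {WT : R.SubRepOn T0}
    (hWS : WS ∈ R.CellOn S0 S1 (β.filter fun b => R.vtx b ∈ S0))
    (hWT : WT ∈ R.CellOn T0 T1 (β.filter fun b => R.vtx b ∈ T0)) :
    glueSub R S0 T0 hT0 WS WT ∈ R.Cell β := by
  have hnot : ∀ p : V0, p ∈ T0 → p ∉ S0 :=
    fun p hp hs => Set.disjoint_left.mp hVd hs hp
  refine ⟨?_, ?_, ?_⟩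
  · -- IsSubrep
    intro a x hx
    have ha : a ∈ S1 ∨ a ∈ T1 := by
      have : a ∈ S1 ∪ T1 := by rw [hA]; trivial
      exact this
    rcases ha with ha | ha
    · obtain ⟨hs, ht⟩ := hS a ha
      simp only [glueSub, dif_pos hs] at hx
      simp only [glueSub, dif_pos ht]
      exact hWS.1 a ha hs ht x hx
    · obtain ⟨hs, ht⟩ := hT a ha
      simp only [glueSub, dif_neg (hnot _ hs)] at hx
      simp only [glueSub, dif_neg (hnot _ ht)]
      exact hWT.1 a ha (hT0 _ (hnot _ hs)) (hT0 _ (hnot _ ht)) x hx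
  · -- finrank
    intro p
    by_cases h : p ∈ S0
    · have e1 : glueSub R S0 T0 hT0 WS WT p = WS ⟨p, h⟩ := dif_pos h
      have e2 := congrArg
        (fun S : Submodule K ({b : B // R.vtx b = p} → K) => Module.finrank K S) e1
      replace e2 : Module.finrank K ↥(glueSub R S0 T0 hT0 WS WT p) =
          Module.finrank K ↥(WS ⟨p, h⟩) := e2
      rw [e2, hWS.2.1 ⟨p, h⟩]
      exact congrArg Finset.card (aux_filter_eq R S0 β p h)
    · have e1 : glueSub R S0 T0 hT0 WS WT p = WT ⟨p, hT0 p h⟩ := dif_neg h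
      have e2 := congrArg
        (fun S : Submodule K ({b : B // R.vtx b = p} → K) => Module.finrank K S) e1
      replace e2 : Module.finrank K ↥(glueSub R S0 T0 hT0 WS WT p) =
          Module.finrank K ↥(WT ⟨p, hT0 p h⟩) := e2
      rw [e2, hWT.2.1 ⟨p, hT0 p h⟩]
      exact congrArg Finset.card (aux_filter_eq R T0 β p (hT0 p h))
  · -- InCell
    intro p
    by_cases h : p ∈ S0
    · obtain ⟨v, hv1, hv2, hv3⟩ := hWS.2.2 ⟨p, h⟩
      have key : ∀ b : B, R.vtx b = p →
          (b ∈ β.filter (fun b => R.vtx b ∈ S0) ↔ b ∈ β) := by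
        intro b hb; simp [Finset.mem_filter, hb, h]
      refine ⟨v ∘ (fun b0 => ⟨b0.val, (key _ b0.prop.2).mpr b0.prop.1, b0.prop.2⟩),
          ?_, ?_, ?_⟩
      · intro b0; exact hv1 _
      · intro b0 b1 hne hc
        refine hv2 _ b1 hne ?_
        rintro ⟨hlt, hnb⟩
        exact hc ⟨hlt, fun hmem => hnb ((key b1.val b1.prop).mpr hmem)⟩
      · show glueSub R S0 T0 hT0 WS WT p = _
        simp only [glueSub, dif_pos h]
        rw [hv3]
        congr 1
        refine (Function.Surjective.range_comp ?_ v).symm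
        rintro ⟨b, hb, hbp⟩
        exact ⟨⟨b, (key b hbp).mp hb, hbp⟩, rfl⟩
    · have h' : p ∈ T0 := hT0 p h
      obtain ⟨v, hv1, hv2, hv3⟩ := hWT.2.2 ⟨p, h'⟩
      have key : ∀ b : B, R.vtx b = p →
          (b ∈ β.filter (fun b => R.vtx b ∈ T0) ↔ b ∈ β) := by
        intro b hb; simp [Finset.mem_filter, hb, h']
      refine ⟨v ∘ (fun b0 => ⟨b0.val, (key _ b0.prop.2).mpr b0.prop.1, b0.prop.2⟩),
          ?_, ?_, ?_⟩
      · intro b0; exact hv1 _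
      · intro b0 b1 hne hc
        refine hv2 _ b1 hne ?_
        rintro ⟨hlt, hnb⟩
        exact hc ⟨hlt, fun hmem => hnb ((key b1.val b1.prop).mpr hmem)⟩
      · show glueSub R S0 T0 hT0 WS WT p = _
        simp only [glueSub, dif_neg h]
        rw [hv3]
        congr 1
        refine (Function.Surjective.range_comp ?_ v).symm
        rintro ⟨b, hb, hbp⟩
        exact ⟨⟨b, (key b hbp).mp hb, hbp⟩, rfl⟩

end Aux

open QGr in
/-- If the quiver `Q` is the disjoint union of two subquivers `S = (S0, S1)`
and `T = (T0, T1)`, then for any representation `M` with ordered basis `B` and any `β ⊆ B`,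
the map `V ↦ ((V_p)_{p ∈ S0}, (V_p)_{p ∈ T0})` is a bijection from the Schubert cell `C_β^M`
onto `C_{β_S}^{M_S} × C_{β_T}^{M_T}`. -/
theorem schubert_cell_of_disjoint_union
    {K V0 A B : Type} [Field K] [Fintype V0] [Fintype A] [Fintype B] [LinearOrder B]
    (R : Rep K V0 A B) (hlin : R.Linear)
    (S0 T0 : Set V0) (S1 T1 : Set A)
    (hV : S0 ∪ T0 = Set.univ) (hVd : Disjoint S0 T0)
    (hA : S1 ∪ T1 = Set.univ) (hAd : Disjoint S1 T1)
    (hS : ∀ a ∈ S1, R.src a ∈ S0 ∧ R.tgt a ∈ S0)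
    (hT : ∀ a ∈ T1, R.src a ∈ T0 ∧ R.tgt a ∈ T0)
    (β : Finset B) :
    ∃ e : ↥(R.Cell β) ≃
        ↥(R.CellOn S0 S1 (β.filter fun b => R.vtx b ∈ S0)) ×
        ↥(R.CellOn T0 T1 (β.filter fun b => R.vtx b ∈ T0)),
      ∀ W : ↥(R.Cell β),
        ((e W).1 : R.SubRepOn S0) = R.resOn S0 W.val ∧
        ((e W).2 : R.SubRepOn T0) = R.resOn T0 W.val := by
  have hT0 : ∀ p : V0, p ∉ S0 → p ∈ T0 := by
    intro p hp
    have : p ∈ S0 ∪ T0 := by rw [hV]; trivial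
    exact this.resolve_left hp
  have hnot : ∀ p : V0, p ∈ T0 → p ∉ S0 :=
    fun p hp hs => Set.disjoint_left.mp hVd hs hp
  refine ⟨{
    toFun := fun W => (⟨R.resOn S0 W.val, aux_res R S0 S1 β W.prop⟩,
                       ⟨R.resOn T0 W.val, aux_res R T0 T1 β W.prop⟩)
    invFun := fun P => ⟨glueSub R S0 T0 hT0 P.1.val P.2.val,
        aux_glue R S0 T0 S1 T1 hT0 hVd hA hS hT β P.1.prop P.2.prop⟩
    left_inv := ?_
    right_inv := ?_ }, fun W => ⟨rfl, rfl⟩⟩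
  · intro W
    apply Subtype.ext
    funext p
    by_cases h : p ∈ S0
    · simp only [glueSub, dif_pos h]; rfl
    · simp only [glueSub, dif_neg h]; rfl
  · intro P
    refine Prod.ext ?_ ?_
    · apply Subtype.ext
      funext p
      show glueSub R S0 T0 hT0 P.1.val P.2.val ↑p = P.1.val p
      simp only [glueSub, dif_pos p.prop]
    · apply Subtype.ext
      funext p
      show glueSub R S0 T0 hT0 P.1.val P.2.val ↑p = P.2.val p
      simp only [glueSub, dif_neg (hnot ↑p p.prop)]
end
end

section
/- Let X be a topological space, I a finite partially ordered set, and {C_i}_{i∈I} a family of pairwise disjoint subsets of X whose union is X. Assume that for all i, j ∈ I, if C_i intersects the closure of C_j nontrivially, then i ≤ j. Then there exist n ∈ ℕ and subsets I_0 ⊆ I_1 ⊆ ... ⊆ I_n = I such that for every l ∈ {0, ..., n}, the set X^(l) := ⋃_{i∈I_l} C_i is closed in X, and for every l ∈ {1, ..., n} and every i ∈ I_l ∖ I_{l−1}, the set C_i is both open and closed in the subspace X^(l) ∖ X^(l−1) (and likewise every C_i with i ∈ I_0 is open and closed in X^(0)). -/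
/-- Helper: if `Y` is covered by the `C j`, `j ∈ T`, the `C j` are pairwise disjoint,
and within `Y` a point of `C j` can lie in `closure (C k)` (for `j, k ∈ T`) only if `j = k`,
then each `C i`, `i ∈ T`, is clopen in the subspace `Y`. -/
lemma clopen_helper {X : Type} [TopologicalSpace X] {I : Type} [Fintype I]
    (C : I → Set X) (Y : Set X) (T : Set I)
    (hdisj : ∀ i j : I, i ≠ j → Disjoint (C i) (C j))
    (hY : ∀ x ∈ Y, ∃ j ∈ T, x ∈ C j)
    (hcl : ∀ j ∈ T, ∀ k ∈ T, ∀ x ∈ Y, x ∈ C j → x ∈ closure (C k) → j = k) :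
    ∀ i ∈ T, IsClopen (Subtype.val ⁻¹' (C i) : Set Y) := by
  intro i hi
  have hclosed : (Subtype.val ⁻¹' (C i) : Set Y)
      = Subtype.val ⁻¹' (closure (C i)) := by
    ext ⟨x, hx⟩
    simp only [Set.mem_preimage]
    constructor
    · exact fun h => subset_closure h
    · intro h
      obtain ⟨j, hj, hxj⟩ := hY x hx
      have := hcl j hj i hi x hx hxj h
      rwa [this] at hxj
  constructor
  · -- closed
    rw [hclosed]
    exact isClosed_closure.preimage continuous_subtype_val
  · -- open: complement is closed
    rw [← isClosed_compl_iff]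
    have : (Subtype.val ⁻¹' (C i) : Set Y)ᶜ
        = ⋃ k ∈ T \ {i}, (Subtype.val ⁻¹' (closure (C k)) : Set Y) := by
      ext ⟨x, hx⟩
      simp only [Set.mem_compl_iff, Set.mem_preimage, Set.mem_iUnion, Set.mem_diff,
        Set.mem_singleton_iff, exists_prop]
      constructor
      · intro hxi
        obtain ⟨j, hj, hxj⟩ := hY x hx
        refine ⟨j, ⟨hj, ?_⟩, subset_closure hxj⟩
        rintro rfl; exact hxi hxj
      · rintro ⟨k, ⟨hk, hki⟩, hxk⟩ hxi
        exact hki (hcl i hi k hk x hx hxi hxk).symm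
    rw [this]
    exact (Set.toFinite _).isClosed_biUnion
      (fun k _ => isClosed_closure.preimage continuous_subtype_val)

/-- Let `X` be a topological space, `I` a finite poset, and `C : I → Set X`
a family of pairwise disjoint subsets covering `X` such that `C i` can meet the closure of
`C j` only if `i ≤ j`.  Then there is a filtration `I₀ ⊆ I₁ ⊆ ⋯ ⊆ I_n = I` such that each
`X^(l) = ⋃_{i ∈ I_l} C i` is closed in `X`, each `C i` with `i ∈ I_l ∖ I_{l-1}` is clopen in
the subspace `X^(l) ∖ X^(l-1)`, and each `C i` with `i ∈ I₀` is clopen in `X^(0)`. -/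
theorem filtration_of_ordered_decomposition
    {X : Type} [TopologicalSpace X] {I : Type} [Fintype I] [PartialOrder I]
    (C : I → Set X)
    (hdisj : ∀ i j : I, i ≠ j → Disjoint (C i) (C j))
    (hcover : (⋃ i, C i) = Set.univ)
    (hclos : ∀ i j : I, (C i ∩ closure (C j)).Nonempty → i ≤ j) :
    ∃ (n : ℕ) (Is : ℕ → Set I),
      Monotone Is ∧ Is n = Set.univ ∧
      (∀ l ≤ n, IsClosed (⋃ i ∈ Is l, C i)) ∧
      (∀ i ∈ Is 0, IsClopen (Subtype.val ⁻¹' (C i) : Set (↥(⋃ j ∈ Is 0, C j)))) ∧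
      (∀ l : ℕ, 1 ≤ l → l ≤ n → ∀ i ∈ Is l \ Is (l - 1),
        IsClopen (Subtype.val ⁻¹' (C i) :
          Set (↥((⋃ j ∈ Is l, C j) \ (⋃ j ∈ Is (l - 1), C j))))) := by
  classical
  -- height function
  set h : I → ℕ := fun i => {k | k < i}.ncard with hh
  have hmono : ∀ {i j : I}, i ≤ j → h i ≤ h j := by
    intro i j hij
    exact Set.ncard_le_ncard (fun k hk => lt_of_lt_of_le hk hij) (Set.toFinite _)
  have hstrict : ∀ {i j : I}, i < j → h i < h j := by
    intro i j hij
    apply Set.ncard_lt_ncard _ (Set.toFinite _)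
    constructor
    · exact fun k hk => lt_trans hk hij
    · intro hsub
      exact lt_irrefl i (hsub hij)
  have hcov : ∀ x : X, ∃ i, x ∈ C i := by
    intro x
    have : x ∈ ⋃ i, C i := hcover ▸ Set.mem_univ x
    simpa using this
  refine ⟨Fintype.card I, fun l => {i | h i ≤ l}, ?_, ?_, ?_, ?_, ?_⟩
  · intro a b hab i hi; exact le_trans hi hab
  · ext i
    simp only [Set.mem_setOf_eq, Set.mem_univ, iff_true]
    have h1 : h i < (Set.univ : Set I).ncard := by
      apply Set.ncard_lt_ncard _ (Set.toFinite _)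
      exact ⟨Set.subset_univ _, fun hsub => lt_irrefl i (hsub (Set.mem_univ i))⟩
    have h2 : h i < Fintype.card I := by
      simpa [Set.ncard_univ, Nat.card_eq_fintype_card] using h1
    omega
  · -- closedness
    intro l _
    have hfin : ({i | h i ≤ l} : Set I).Finite := Set.toFinite _
    rw [← closure_subset_iff_isClosed, hfin.closure_biUnion]
    intro x hx
    simp only [Set.mem_iUnion, exists_prop] at hx ⊢
    obtain ⟨j, hj, hxj⟩ := hx
    obtain ⟨i, hxi⟩ := hcov x
    have hij : i ≤ j := hclos i j ⟨x, hxi, hxj⟩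
    exact ⟨i, le_trans (hmono hij) hj, hxi⟩
  · -- l = 0 clopen
    intro i hi
    apply clopen_helper C _ {i | h i ≤ 0} hdisj _ _ i hi
    · intro x hx
      simp only [Set.mem_iUnion, exists_prop] at hx
      exact hx
    · intro j hj k hk x hx hxj hxk
      have hjk : j ≤ k := hclos j k ⟨x, hxj, hxk⟩
      rcases lt_or_eq_of_le hjk with hlt | heq
      · exact absurd (hstrict hlt) (by simp only [Set.mem_setOf_eq] at hj hk; omega)
      · exact heq
  · -- general l clopen
    intro l hl1 hln i hi
    apply clopen_helper C _ ({i | h i ≤ l} \ {i | h i ≤ l - 1}) hdisj _ _ i hi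
    · rintro x ⟨hx1, hx2⟩
      simp only [Set.mem_iUnion, exists_prop] at hx1 hx2
      obtain ⟨j, hj, hxj⟩ := hx1
      refine ⟨j, ⟨hj, fun hj' => hx2 ⟨j, hj', hxj⟩⟩, hxj⟩
    · rintro j ⟨hj1, hj2⟩ k ⟨hk1, hk2⟩ x hx hxj hxk
      have hjk : j ≤ k := hclos j k ⟨x, hxj, hxk⟩
      rcases lt_or_eq_of_le hjk with hlt | heq
      · exact absurd (hstrict hlt)
          (by simp only [Set.mem_setOf_eq] at hj1 hj2 hk1 hk2; omega)
      · exact heq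
end
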